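/- arXiv:2308.14386 — 11 statements merged into one kernel-verified Lean document; each statement's English description precedes it below -/
import Mathlib

section
/- If θ₁, θ₂, θ₃ ∈ (0,π) satisfy θ₁+θ₂+θ₃ > π, θ₁+θ₂ < θ₃+π, θ₂+θ₃ < θ₁+π, and θ₃+θ₁ < θ₂+π, then the 3×3 symmetric real matrix J = [[1, −cos θ₃, −cos θ₂], [−cos θ₃, 1, −cos θ₁], [−cos θ₂, −cos θ₁, 1]] is positive definite. -/
open Real Matrix

/-- Under condition (c2), the Gram matrix of the three geodesic planes is positive
definite. -/
theorem gram_matrix_posDef_of_c2 (θ₁ θ₂ θ₃ : ℝ)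
    (h₁ : θ₁ ∈ Set.Ioo 0 π) (h₂ : θ₂ ∈ Set.Ioo 0 π) (h₃ : θ₃ ∈ Set.Ioo 0 π)
    (hsum : θ₁ + θ₂ + θ₃ > π)
    (h₁₂ : θ₁ + θ₂ < θ₃ + π) (h₂₃ : θ₂ + θ₃ < θ₁ + π) (h₃₁ : θ₃ + θ₁ < θ₂ + π) :
    (!![(1 : ℝ), -cos θ₃, -cos θ₂;
        -cos θ₃, 1, -cos θ₁;
        -cos θ₂, -cos θ₁, 1]).PosDef := by
  obtain ⟨h10, h1p⟩ := h₁
  obtain ⟨h20, h2p⟩ := h₂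
  obtain ⟨h30, h3p⟩ := h₃
  set c₁ := cos θ₁
  set c₂ := cos θ₂
  set c₃ := cos θ₃
  have hs2 : 0 < sin θ₂ := sin_pos_of_pos_of_lt_pi h20 h2p
  have hs3 : 0 < sin θ₃ := sin_pos_of_pos_of_lt_pi h30 h3p
  -- key1 : c₁ + c₂ c₃ < sin θ₂ sin θ₃
  have key1 : c₁ + c₂ * c₃ < sin θ₂ * sin θ₃ := by
    have habs : |θ₂ + θ₃ - π| < θ₁ := by
      rw [abs_lt]; constructor <;> linarith
    have := Real.cos_lt_cos_of_nonneg_of_le_pi (abs_nonneg (θ₂ + θ₃ - π)) h1p.le habs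
    rw [Real.cos_abs] at this
    have hexp : cos (θ₂ + θ₃ - π) = -(c₂ * c₃ - sin θ₂ * sin θ₃) := by
      rw [show θ₂ + θ₃ - π = (θ₂ + θ₃) - π by ring, Real.cos_sub, Real.cos_pi,
        Real.sin_pi, Real.cos_add]
      ring
    rw [hexp] at this
    linarith
  -- key2 : -(sin θ₂ * sin θ₃) < c₁ + c₂ c₃
  have key2 : -(sin θ₂ * sin θ₃) < c₁ + c₂ * c₃ := by
    have habs : θ₁ < π - |θ₂ - θ₃| := by
      rcases abs_cases (θ₂ - θ₃) with ⟨h, _⟩ | ⟨h, _⟩ <;> rw [h] <;> linarith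
    have hle : π - |θ₂ - θ₃| ≤ π := by
      have := abs_nonneg (θ₂ - θ₃); linarith
    have := Real.cos_lt_cos_of_nonneg_of_le_pi h10.le hle habs
    have hexp : cos (π - |θ₂ - θ₃|) = -(c₂ * c₃ + sin θ₂ * sin θ₃) := by
      rw [Real.cos_pi_sub, Real.cos_abs, Real.cos_sub]
    rw [hexp] at this
    linarith
  have hD : 0 < (1 - c₃ ^ 2) * (1 - c₂ ^ 2) - (c₁ + c₂ * c₃) ^ 2 := by
    have h2 : sin θ₂ ^ 2 = 1 - c₂ ^ 2 := by
      have := sin_sq_add_cos_sq θ₂; linarith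
    have h3 : sin θ₃ ^ 2 = 1 - c₃ ^ 2 := by
      have := sin_sq_add_cos_sq θ₃; linarith
    nlinarith [mul_pos (by linarith : (0:ℝ) < sin θ₂ * sin θ₃ - (c₁ + c₂ * c₃))
      (by linarith : (0:ℝ) < sin θ₂ * sin θ₃ + (c₁ + c₂ * c₃))]
  have hc3 : 0 < 1 - c₃ ^ 2 := by
    nlinarith [sin_sq_add_cos_sq θ₃, mul_pos hs3 hs3]
  rw [Matrix.posDef_iff_dotProduct_mulVec]
  constructor
  · ext i j
    fin_cases i <;> fin_cases j <;>
      simp [Matrix.conjTranspose_apply]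
  · intro x hx
    have hq : ∀ a b c : ℝ, (a ≠ 0 ∨ b ≠ 0 ∨ c ≠ 0) →
        0 < a * a + b * b + c * c - 2 * c₃ * a * b - 2 * c₂ * a * c - 2 * c₁ * b * c := by
      intro a b c h
      rcases eq_or_ne c 0 with rfl | hc
      · rcases eq_or_ne b 0 with rfl | hb
        · rcases h with h | h | h
          · nlinarith [mul_self_pos.mpr h]
          all_goals simp at h
        · nlinarith [sq_nonneg (a - c₃ * b), mul_pos hc3 (by positivity : (0:ℝ) < b ^ 2)]
      · nlinarith [sq_nonneg (a - c₃ * b - c₂ * c),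
          sq_nonneg ((1 - c₃ ^ 2) * b - (c₁ + c₂ * c₃) * c),
          mul_pos hD (by positivity : (0:ℝ) < c ^ 2), hc3]
    have hx' : x 0 ≠ 0 ∨ x 1 ≠ 0 ∨ x 2 ≠ 0 := by
      by_contra hcon
      push_neg at hcon
      apply hx
      funext i
      fin_cases i <;> simp [hcon.1, hcon.2.1, hcon.2.2]
    have := hq (x 0) (x 1) (x 2) hx'
    simp only [star_trivial, dotProduct, Matrix.mulVec, Fin.sum_univ_three,
      Matrix.cons_val', Matrix.cons_val_zero, Matrix.cons_val_one, Matrix.head_cons,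
      Matrix.empty_val', Matrix.cons_val_fin_one, Matrix.head_fin_const,
      Matrix.cons_val_two, Matrix.tail_cons, Matrix.of_apply]
    ring_nf
    ring_nf at this
    linarith
end

section
/- For all real numbers φ₁, φ₂, φ₃, the determinant of the 3×3 symmetric matrix A = [[1, cos φ₃, cos φ₂], [cos φ₃, 1, cos φ₁], [cos φ₂, cos φ₁, 1]] equals 4 · sin((φ₁+φ₂+φ₃)/2) · sin((φ₁+φ₂−φ₃)/2) · sin((φ₂+φ₃−φ₁)/2) · sin((φ₃+φ₁−φ₂)/2). -/
open Real Matrix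

/-- Determinant identity for the Gram matrix of three unit vectors with pairwise
angular distances `φ₁, φ₂, φ₃`. -/
theorem det_gram_matrix_cos_eq (φ₁ φ₂ φ₃ : ℝ) :
    (!![(1 : ℝ), cos φ₃, cos φ₂;
        cos φ₃, 1, cos φ₁;
        cos φ₂, cos φ₁, 1]).det
      = 4 * sin ((φ₁ + φ₂ + φ₃) / 2) * sin ((φ₁ + φ₂ - φ₃) / 2) *
          sin ((φ₂ + φ₃ - φ₁) / 2) * sin ((φ₃ + φ₁ - φ₂) / 2) := by
  have key : ∀ x y : ℝ, sin x * sin y = (cos (x - y) - cos (x + y)) / 2 := by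
    intro x y
    rw [cos_sub, cos_add]
    ring
  have hAB : sin ((φ₁ + φ₂ + φ₃) / 2) * sin ((φ₁ + φ₂ - φ₃) / 2)
      = (cos φ₃ - (cos φ₁ * cos φ₂ - sin φ₁ * sin φ₂)) / 2 := by
    rw [key, show (φ₁ + φ₂ + φ₃) / 2 - (φ₁ + φ₂ - φ₃) / 2 = φ₃ by ring,
      show (φ₁ + φ₂ + φ₃) / 2 + (φ₁ + φ₂ - φ₃) / 2 = φ₁ + φ₂ by ring, cos_add]
  have hCD : sin ((φ₂ + φ₃ - φ₁) / 2) * sin ((φ₃ + φ₁ - φ₂) / 2)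
      = ((cos φ₂ * cos φ₁ + sin φ₂ * sin φ₁) - cos φ₃) / 2 := by
    rw [key, show (φ₂ + φ₃ - φ₁) / 2 - (φ₃ + φ₁ - φ₂) / 2 = φ₂ - φ₁ by ring,
      show (φ₂ + φ₃ - φ₁) / 2 + (φ₃ + φ₁ - φ₂) / 2 = φ₃ by ring, cos_sub]
  have hre : 4 * sin ((φ₁ + φ₂ + φ₃) / 2) * sin ((φ₁ + φ₂ - φ₃) / 2) *
        sin ((φ₂ + φ₃ - φ₁) / 2) * sin ((φ₃ + φ₁ - φ₂) / 2)
      = 4 * (sin ((φ₁ + φ₂ + φ₃) / 2) * sin ((φ₁ + φ₂ - φ₃) / 2)) *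
        (sin ((φ₂ + φ₃ - φ₁) / 2) * sin ((φ₃ + φ₁ - φ₂) / 2)) := by ring
  rw [hre, hAB, hCD, det_fin_three]
  simp only [Matrix.cons_val', Matrix.cons_val_zero, Matrix.cons_val_one, Matrix.head_cons,
    Matrix.empty_val', Matrix.cons_val_fin_one, Matrix.head_fin_const, Matrix.cons_val_two,
    Matrix.tail_cons, Matrix.of_apply]
  have p1 := sin_sq_add_cos_sq φ₁
  have p2 := sin_sq_add_cos_sq φ₂
  linear_combination (cos φ₂ ^ 2 - 1) * p1 - sin φ₁ ^ 2 * p2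
end

section
/- If φ₁, φ₂, φ₃ ∈ (0,π) satisfy the strict triangle inequalities φ₁+φ₂ > φ₃, φ₂+φ₃ > φ₁, φ₃+φ₁ > φ₂, together with φ₁+φ₂+φ₃ < 2π, then the 3×3 symmetric real matrix A = [[1, cos φ₃, cos φ₂], [cos φ₃, 1, cos φ₁], [cos φ₂, cos φ₁, 1]] is positive definite. -/
open Real Matrix

/-- If `φ₁, φ₂, φ₃ ∈ (0,π)` satisfy the strict triangle inequalities and have sum
less than `2π`, the associated Gram matrix is positive definite. -/
theorem gram_matrix_cos_posDef (φ₁ φ₂ φ₃ : ℝ)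
    (h₁ : φ₁ ∈ Set.Ioo 0 π) (h₂ : φ₂ ∈ Set.Ioo 0 π) (h₃ : φ₃ ∈ Set.Ioo 0 π)
    (h₁₂ : φ₁ + φ₂ > φ₃) (h₂₃ : φ₂ + φ₃ > φ₁) (h₃₁ : φ₃ + φ₁ > φ₂)
    (hsum : φ₁ + φ₂ + φ₃ < 2 * π) :
    (!![(1 : ℝ), cos φ₃, cos φ₂;
        cos φ₃, 1, cos φ₁;
        cos φ₂, cos φ₁, 1]).PosDef := by
  obtain ⟨hφ₁0, hφ₁π⟩ := h₁
  obtain ⟨hφ₂0, hφ₂π⟩ := h₂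
  obtain ⟨hφ₃0, hφ₃π⟩ := h₃
  set a := cos φ₁
  set b := cos φ₂
  set c := cos φ₃
  -- determinant positivity
  have hfac : 1 - a^2 - b^2 - c^2 + 2*a*b*c
      = (cos (φ₁ - φ₂) - c) * (c - cos (φ₁ + φ₂)) := by
    rw [Real.cos_sub, Real.cos_add]
    have s1 := Real.sin_sq_add_cos_sq φ₁
    have s2 := Real.sin_sq_add_cos_sq φ₂
    ring_nf
    nlinarith [s1, s2, sq_nonneg (sin φ₁ * sin φ₂)]
  have hf1 : cos (φ₁ - φ₂) - c > 0 := by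
    have : cos (φ₁ - φ₂) = cos |φ₁ - φ₂| := (Real.cos_abs _).symm
    rw [this]
    have habs : |φ₁ - φ₂| < φ₃ := abs_sub_lt_iff.mpr ⟨by linarith, by linarith⟩
    have := Real.cos_lt_cos_of_nonneg_of_le_pi (abs_nonneg _) hφ₃π.le habs
    linarith
  have hf2 : c - cos (φ₁ + φ₂) > 0 := by
    rcases le_or_gt (φ₁ + φ₂) π with h | h
    · have := Real.cos_lt_cos_of_nonneg_of_le_pi hφ₃0.le h h₁₂
      linarith
    · have heq : cos (φ₁ + φ₂) = cos (2 * π - (φ₁ + φ₂)) := by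
        rw [Real.cos_sub, Real.cos_two_pi, Real.sin_two_pi]; ring
      rw [heq]
      have := Real.cos_lt_cos_of_nonneg_of_le_pi hφ₃0.le
        (by linarith : 2 * π - (φ₁ + φ₂) ≤ π) (by linarith)
      linarith
  have hD : 0 < 1 - a^2 - b^2 - c^2 + 2*a*b*c := by
    rw [hfac]; positivity
  have hc2 : 0 < 1 - c^2 := by
    have hs := Real.sin_pos_of_pos_of_lt_pi hφ₃0 hφ₃π
    nlinarith [Real.sin_sq_add_cos_sq φ₃]
  rw [Matrix.posDef_iff_dotProduct_mulVec]
  constructor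
  · ext i j
    fin_cases i <;> fin_cases j <;>
      simp [Matrix.conjTranspose, Matrix.transpose]
  · intro x hx
    have hx' : x 0 ≠ 0 ∨ x 1 ≠ 0 ∨ x 2 ≠ 0 := by
      by_contra h
      push_neg at h
      exact hx (funext fun i => by fin_cases i <;> simp [h.1, h.2.1, h.2.2])
    have hQ : star x ⬝ᵥ (!![(1 : ℝ), c, b; c, 1, a; b, a, 1] *ᵥ x)
        = x 0 ^ 2 + x 1 ^ 2 + x 2 ^ 2 + 2*c*(x 0)*(x 1) + 2*b*(x 0)*(x 2)
          + 2*a*(x 1)*(x 2) := by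
      simp [dotProduct, Matrix.mulVec, Fin.sum_univ_three]
      ring
    rw [hQ]
    rcases eq_or_ne (x 2) 0 with h2 | h2
    · rcases eq_or_ne (x 1) 0 with h1 | h1
      · have h0 : x 0 ≠ 0 := by tauto
        rw [h1, h2]
        nlinarith [sq_pos_of_ne_zero h0]
      · rw [h2]
        nlinarith [sq_pos_of_ne_zero h1, sq_nonneg (x 0 + c * x 1),
          mul_pos hc2 (sq_pos_of_ne_zero h1)]
    · nlinarith [sq_pos_of_ne_zero h2, sq_nonneg (x 0 + c * x 1 + b * x 2),
        sq_nonneg ((1 - c^2) * x 1 + (a - b*c) * x 2),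
        mul_pos hD (sq_pos_of_ne_zero h2), sq_nonneg (x 1), sq_nonneg (x 0)]
end

section
/- Let θ₁₂, θ₂₃, θ₃₁ ∈ (0,π) satisfy θ₁₂+θ₂₃+θ₃₁ > π, θ₁₂+θ₂₃ < θ₃₁+π, θ₂₃+θ₃₁ < θ₁₂+π, and θ₃₁+θ₁₂ < θ₂₃+π, and let r₁, r₂, r₃ ∈ (0,π). Set a_μ = cos r_μ and x_μ = sin r_μ for μ = 1,2,3. Then sin²θ₁₂·x₁²x₂² + sin²θ₂₃·x₂²x₃² + sin²θ₃₁·x₃²x₁² − (2 + 2 cos θ₁₂ cos θ₂₃ cos θ₃₁)·x₁²x₂²x₃² + 2(cos θ₂₃ + cos θ₃₁ cos θ₁₂)·a₂a₃x₂x₃x₁² + 2(cos θ₃₁ + cos θ₁₂ cos θ₂₃)·a₃a₁x₃x₁x₂² + 2(cos θ₁₂ + cos θ₂₃ cos θ₃₁)·a₁a₂x₁x₂x₃² > 0. -/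
open Real

set_option maxHeartbeats 1000000 in
/-- The key strict inequality (formula (7.4) of the paper) establishing the triangle
inequalities for the distances between centers of a three-circle configuration with
radii `r₁, r₂, r₃` and overlap angles `θ₁₂, θ₂₃, θ₃₁` satisfying condition (c2). -/
theorem three_circle_key_inequality (θ₁₂ θ₂₃ θ₃₁ r₁ r₂ r₃ : ℝ)
    (h₁₂ : θ₁₂ ∈ Set.Ioo 0 π) (h₂₃ : θ₂₃ ∈ Set.Ioo 0 π) (h₃₁ : θ₃₁ ∈ Set.Ioo 0 π)
    (hsum : θ₁₂ + θ₂₃ + θ₃₁ > π)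
    (ha : θ₁₂ + θ₂₃ < θ₃₁ + π) (hb : θ₂₃ + θ₃₁ < θ₁₂ + π) (hc : θ₃₁ + θ₁₂ < θ₂₃ + π)
    (hr₁ : r₁ ∈ Set.Ioo 0 π) (hr₂ : r₂ ∈ Set.Ioo 0 π) (hr₃ : r₃ ∈ Set.Ioo 0 π) :
    sin θ₁₂ ^ 2 * sin r₁ ^ 2 * sin r₂ ^ 2
      + sin θ₂₃ ^ 2 * sin r₂ ^ 2 * sin r₃ ^ 2
      + sin θ₃₁ ^ 2 * sin r₃ ^ 2 * sin r₁ ^ 2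
      - (2 + 2 * cos θ₁₂ * cos θ₂₃ * cos θ₃₁) * sin r₁ ^ 2 * sin r₂ ^ 2 * sin r₃ ^ 2
      + 2 * (cos θ₂₃ + cos θ₃₁ * cos θ₁₂) * cos r₂ * cos r₃ * sin r₂ * sin r₃ * sin r₁ ^ 2
      + 2 * (cos θ₃₁ + cos θ₁₂ * cos θ₂₃) * cos r₃ * cos r₁ * sin r₃ * sin r₁ * sin r₂ ^ 2
      + 2 * (cos θ₁₂ + cos θ₂₃ * cos θ₃₁) * cos r₁ * cos r₂ * sin r₁ * sin r₂ * sin r₃ ^ 2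
      > 0 := by
  obtain ⟨h12a, h12b⟩ := h₁₂
  obtain ⟨h23a, h23b⟩ := h₂₃
  obtain ⟨h31a, h31b⟩ := h₃₁
  obtain ⟨hr1a, hr1b⟩ := hr₁
  obtain ⟨hr2a, hr2b⟩ := hr₂
  obtain ⟨hr3a, hr3b⟩ := hr₃
  have hpi := Real.pi_pos
  -- positivity of sines
  have hx1 : 0 < sin r₁ := sin_pos_of_pos_of_lt_pi hr1a hr1b
  have hx2 : 0 < sin r₂ := sin_pos_of_pos_of_lt_pi hr2a hr2b
  have hx3 : 0 < sin r₃ := sin_pos_of_pos_of_lt_pi hr3a hr3b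
  have hs23 : 0 < sin θ₂₃ := sin_pos_of_pos_of_lt_pi h23a h23b
  -- the determinant D is positive
  have hA : cos ((θ₁₂ + (θ₂₃ + θ₃₁)) / 2) < 0 := by
    have h1 : 0 < cos ((θ₁₂ + (θ₂₃ + θ₃₁)) / 2 - π) := by
      apply cos_pos_of_mem_Ioo
      constructor <;> [skip; skip] <;> nlinarith
    have h2 : cos ((θ₁₂ + (θ₂₃ + θ₃₁)) / 2 - π) = -cos ((θ₁₂ + (θ₂₃ + θ₃₁)) / 2) := by
      rw [cos_sub_pi]
    linarith [h2 ▸ h1]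
  have hB : 0 < cos ((θ₁₂ - (θ₂₃ + θ₃₁)) / 2) := by
    apply cos_pos_of_mem_Ioo
    constructor <;> nlinarith
  have hC : 0 < cos ((θ₁₂ + (θ₂₃ - θ₃₁)) / 2) := by
    apply cos_pos_of_mem_Ioo
    constructor <;> nlinarith
  have hDD : 0 < cos ((θ₁₂ - (θ₂₃ - θ₃₁)) / 2) := by
    apply cos_pos_of_mem_Ioo
    constructor <;> nlinarith
  have e1 : cos θ₁₂ + cos (θ₂₃ + θ₃₁)
      = 2 * cos ((θ₁₂ + (θ₂₃ + θ₃₁)) / 2) * cos ((θ₁₂ - (θ₂₃ + θ₃₁)) / 2) :=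
    cos_add_cos _ _
  have e2 : cos θ₁₂ + cos (θ₂₃ - θ₃₁)
      = 2 * cos ((θ₁₂ + (θ₂₃ - θ₃₁)) / 2) * cos ((θ₁₂ - (θ₂₃ - θ₃₁)) / 2) :=
    cos_add_cos _ _
  have hfac : 1 - cos θ₁₂ ^ 2 - cos θ₂₃ ^ 2 - cos θ₃₁ ^ 2
        - 2 * cos θ₁₂ * cos θ₂₃ * cos θ₃₁
      = -((cos θ₁₂ + cos (θ₂₃ + θ₃₁)) * (cos θ₁₂ + cos (θ₂₃ - θ₃₁))) := by
    rw [cos_add, cos_sub]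
    linear_combination (-(sin θ₃₁ ^ 2)) * sin_sq_add_cos_sq θ₂₃
      - (1 - cos θ₂₃ ^ 2) * sin_sq_add_cos_sq θ₃₁
  have hD : 0 < 1 - cos θ₁₂ ^ 2 - cos θ₂₃ ^ 2 - cos θ₃₁ ^ 2
      - 2 * cos θ₁₂ * cos θ₂₃ * cos θ₃₁ := by
    rw [hfac, e1, e2]
    nlinarith [mul_pos (mul_pos (mul_pos (neg_pos.mpr hA) hB) hC) hDD]
  -- the key algebraic identity (sum of squares decomposition)
  have key : sin θ₂₃ ^ 2 *
      (sin θ₁₂ ^ 2 * sin r₁ ^ 2 * sin r₂ ^ 2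
      + sin θ₂₃ ^ 2 * sin r₂ ^ 2 * sin r₃ ^ 2
      + sin θ₃₁ ^ 2 * sin r₃ ^ 2 * sin r₁ ^ 2
      - (2 + 2 * cos θ₁₂ * cos θ₂₃ * cos θ₃₁) * sin r₁ ^ 2 * sin r₂ ^ 2 * sin r₃ ^ 2
      + 2 * (cos θ₂₃ + cos θ₃₁ * cos θ₁₂) * cos r₂ * cos r₃ * sin r₂ * sin r₃ * sin r₁ ^ 2
      + 2 * (cos θ₃₁ + cos θ₁₂ * cos θ₂₃) * cos r₃ * cos r₁ * sin r₃ * sin r₁ * sin r₂ ^ 2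
      + 2 * (cos θ₁₂ + cos θ₂₃ * cos θ₃₁) * cos r₁ * cos r₂ * sin r₁ * sin r₂ * sin r₃ ^ 2)
      = (sin θ₂₃ ^ 2 * (cos r₁ * sin r₂ * sin r₃)
          + (cos θ₁₂ + cos θ₂₃ * cos θ₃₁) * (cos r₂ * sin r₃ * sin r₁)
          + (cos θ₃₁ + cos θ₁₂ * cos θ₂₃) * (cos r₃ * sin r₁ * sin r₂)) ^ 2
        + (1 - cos θ₁₂ ^ 2 - cos θ₂₃ ^ 2 - cos θ₃₁ ^ 2
            - 2 * cos θ₁₂ * cos θ₂₃ * cos θ₃₁) *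
          ((cos r₂ * sin r₃ * sin r₁ + cos θ₂₃ * (cos r₃ * sin r₁ * sin r₂)) ^ 2
            + sin θ₂₃ ^ 2 * (cos r₃ * sin r₁ * sin r₂) ^ 2
            + sin θ₂₃ ^ 2 * (sin r₁ ^ 2 * sin r₂ ^ 2 * sin r₃ ^ 2)) := by
    linear_combination (sin θ₂₃ ^ 2 * sin r₁ ^ 2 * sin r₂ ^ 2) * sin_sq_add_cos_sq θ₁₂ +
      (sin r₂ ^ 2 * sin r₃ ^ 2 + sin r₁ ^ 2 * sin r₂ ^ 2 - (3 : ℝ) * sin r₁ ^ 2 * sin r₂ ^ 2 * sin r₃ ^ 2 - cos r₃ ^ 2 * sin r₁ ^ 2 * sin r₂ ^ 2 - cos r₁ ^ 2 * sin r₂ ^ 2 * sin r₃ ^ 2 + sin θ₃₁ ^ 2 * sin r₁ ^ 2 * sin r₃ ^ 2 + sin θ₂₃ ^ 2 * sin r₂ ^ 2 * sin r₃ ^ 2 - sin θ₂₃ ^ 2 * cos r₁ ^ 2 * sin r₂ ^ 2 * sin r₃ ^ 2 + cos θ₃₁ ^ 2 * sin r₁ ^ 2 * sin r₂ ^ 2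 * sin r₃ ^ 2 + cos θ₃₁ ^ 2 * cos r₃ ^ 2 * sin r₁ ^ 2 * sin r₂ ^ 2 + (2 : ℝ) * cos θ₂₃ * cos r₂ * cos r₃ * sin r₁ ^ 2 * sin r₂ * sin r₃ - cos θ₂₃ ^ 2 * sin r₂ ^ 2 * sin r₃ ^ 2 + cos θ₂₃ ^ 2 * sin r₁ ^ 2 * sin r₂ ^ 2 * sin r₃ ^ 2 + cos θ₂₃ ^ 2 * cos r₃ ^ 2 * sin r₁ ^ 2 * sin r₂ ^ 2 + cos θ₂₃ ^ 2 * cos r₁ ^ 2 * sin r₂ ^ 2 * sin r₃ ^ 2 + (2 : ℝ) * cos θ₁₂ * cos θ₃₁ * cos r₂ * cos r₃ * sin r₁ ^ 2 * sin r₂ * sin r₃ + (2 : ℝ) * cos θ₁₂ * cos θ₂₃ * cos θ₃₁ * cos r₃ ^ 2 * sin r₁ ^ 2 * sin r₂ ^ 2 - cos θ₁₂ ^ 2 * sin r₁ ^ 2 * sin r₂ ^ 2 + cos θ₁₂ ^ 2 * sin r₁ ^ 2 * sin r₂ ^ 2 * sin r₃ ^ 2 + cos θ₁₂ ^ 2 *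 cos r₃ ^ 2 * sin r₁ ^ 2 * sin r₂ ^ 2) * sin_sq_add_cos_sq θ₂₃ +
      (sin r₁ ^ 2 * sin r₃ ^ 2 - cos θ₂₃ ^ 2 * sin r₁ ^ 2 * sin r₃ ^ 2) * sin_sq_add_cos_sq θ₃₁ +
      (-sin r₂ ^ 2 * sin r₃ ^ 2 + (2 : ℝ) * cos θ₂₃ ^ 2 * sin r₂ ^ 2 * sin r₃ ^ 2 - cos θ₂₃ ^ 4 * sin r₂ ^ 2 * sin r₃ ^ 2) * sin_sq_add_cos_sq r₁ +
      (-sin r₁ ^ 2 * sin r₃ ^ 2 + cos θ₃₁ ^ 2 * sin r₁ ^ 2 * sin r₃ ^ 2 + cos θ₂₃ ^ 2 * sin r₁ ^ 2 * sin r₃ ^ 2 - cos θ₂₃ ^ 2 * cos θ₃₁ ^ 2 * sin r₁ ^ 2 * sin r₃ ^ 2) * sin_sq_add_cos_sq r₂ +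
      (-sin r₁ ^ 2 * sin r₂ ^ 2 + cos θ₂₃ ^ 2 * sin r₁ ^ 2 * sin r₂ ^ 2 + cos θ₁₂ ^ 2 * sin r₁ ^ 2 * sin r₂ ^ 2 - cos θ₁₂ ^ 2 * cos θ₂₃ ^ 2 * sin r₁ ^ 2 * sin r₂ ^ 2) * sin_sq_add_cos_sq r₃
  have hP : 0 < sin r₁ ^ 2 * sin r₂ ^ 2 * sin r₃ ^ 2 := by positivity
  have hs23sq : 0 < sin θ₂₃ ^ 2 := by positivity
  have hinner : 0 < (cos r₂ * sin r₃ * sin r₁ + cos θ₂₃ * (cos r₃ * sin r₁ * sin r₂)) ^ 2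
      + sin θ₂₃ ^ 2 * (cos r₃ * sin r₁ * sin r₂) ^ 2
      + sin θ₂₃ ^ 2 * (sin r₁ ^ 2 * sin r₂ ^ 2 * sin r₃ ^ 2) := by
    have t1 := sq_nonneg (cos r₂ * sin r₃ * sin r₁ + cos θ₂₃ * (cos r₃ * sin r₁ * sin r₂))
    have t2 := mul_nonneg hs23sq.le (sq_nonneg (cos r₃ * sin r₁ * sin r₂))
    have t3 := mul_pos hs23sq hP
    linarith
  have hRHS : 0 < sin θ₂₃ ^ 2 *
      (sin θ₁₂ ^ 2 * sin r₁ ^ 2 * sin r₂ ^ 2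
      + sin θ₂₃ ^ 2 * sin r₂ ^ 2 * sin r₃ ^ 2
      + sin θ₃₁ ^ 2 * sin r₃ ^ 2 * sin r₁ ^ 2
      - (2 + 2 * cos θ₁₂ * cos θ₂₃ * cos θ₃₁) * sin r₁ ^ 2 * sin r₂ ^ 2 * sin r₃ ^ 2
      + 2 * (cos θ₂₃ + cos θ₃₁ * cos θ₁₂) * cos r₂ * cos r₃ * sin r₂ * sin r₃ * sin r₁ ^ 2
      + 2 * (cos θ₃₁ + cos θ₁₂ * cos θ₂₃) * cos r₃ * cos r₁ * sin r₃ * sin r₁ * sin r₂ ^ 2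
      + 2 * (cos θ₁₂ + cos θ₂₃ * cos θ₃₁) * cos r₁ * cos r₂ * sin r₁ * sin r₂ * sin r₃ ^ 2) := by
    rw [key]
    have t4 := sq_nonneg (sin θ₂₃ ^ 2 * (cos r₁ * sin r₂ * sin r₃)
      + (cos θ₁₂ + cos θ₂₃ * cos θ₃₁) * (cos r₂ * sin r₃ * sin r₁)
      + (cos θ₃₁ + cos θ₁₂ * cos θ₂₃) * (cos r₃ * sin r₁ * sin r₂))
    have t5 := mul_pos hD hinner
    linarith
  rcases mul_pos_iff.mp hRHS with ⟨_, h⟩ | ⟨h, _⟩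
  · exact h
  · linarith
end

section
/- Let θ₁₂, θ₂₃, θ₃₁ ∈ (0,π) satisfy θ₁₂+θ₂₃+θ₃₁ > π, θ₁₂+θ₂₃ < θ₃₁+π, θ₂₃+θ₃₁ < θ₁₂+π, and θ₃₁+θ₁₂ < θ₂₃+π, and let r₁, r₂, r₃ ∈ (0,π). For each pair (μ,ν) ∈ {(1,2),(2,3),(3,1)} define l_μν = arccos(cos r_μ cos r_ν − cos θ_μν · sin r_μ sin r_ν). Then each l_μν ∈ (0,π), the strict triangle inequalities l₁₂+l₂₃ > l₃₁, l₂₃+l₃₁ > l₁₂, l₃₁+l₁₂ > l₂₃ hold, and l₁₂+l₂₃+l₃₁ < 2π. -/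
open Real

private lemma cosIoo {x : ℝ} (hx : x ∈ Set.Ioo 0 π) : Real.cos x ∈ Set.Ioo (-1 : ℝ) 1 := by
  constructor
  · have h := Real.strictAntiOn_cos ⟨hx.1.le, hx.2.le⟩ ⟨Real.pi_pos.le, le_refl π⟩ hx.2
    simpa [Real.cos_pi] using h
  · have h := Real.strictAntiOn_cos ⟨le_refl (0 : ℝ), Real.pi_pos.le⟩ ⟨hx.1.le, hx.2.le⟩ hx.1
    simpa [Real.cos_zero] using h

private lemma arccosIoo {t : ℝ} (ht : t ∈ Set.Ioo (-1 : ℝ) 1) :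
    Real.arccos t ∈ Set.Ioo 0 π := by
  refine ⟨Real.arccos_pos.mpr ht.2, lt_of_le_of_ne (Real.arccos_le_pi t) ?_⟩
  intro hEq
  have := Real.arccos_eq_pi.mp hEq
  linarith [ht.1]

private lemma triAux {x y z : ℝ} (hx : x ∈ Set.Ioo 0 π) (hy : y ∈ Set.Ioo 0 π)
    (hz : z ∈ Set.Ioo 0 π) (h : Real.cos (x + y) < Real.cos z) :
    z < x + y ∧ x + y + z < 2 * π := by
  constructor
  · rcases le_or_gt π (x + y) with hp | hp
    · exact lt_of_lt_of_le hz.2 hp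
    · exact (Real.strictAntiOn_cos.lt_iff_gt
        ⟨by linarith [hx.1, hy.1], hp.le⟩ ⟨hz.1.le, hz.2.le⟩).mp h
  · rcases le_or_gt (x + y) π with hp | hp
    · linarith [hz.2]
    · have h2 : Real.cos (2 * π - (x + y)) < Real.cos z := by rwa [Real.cos_two_pi_sub]
      have h3 : z < 2 * π - (x + y) := (Real.strictAntiOn_cos.lt_iff_gt
        ⟨by linarith [hx.2, hy.2], by linarith⟩ ⟨hz.1.le, hz.2.le⟩).mp h2
      linarith

private lemma pairAux {u v w : ℝ} (hu : u ∈ Set.Ioo (-1 : ℝ) 1) (hv : v ∈ Set.Ioo (-1 : ℝ) 1)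
    (hw : w ∈ Set.Ioo (-1 : ℝ) 1) (h : (u * v - w) ^ 2 < (1 - u ^ 2) * (1 - v ^ 2)) :
    Real.arccos w < Real.arccos u + Real.arccos v ∧
      Real.arccos u + Real.arccos v + Real.arccos w < 2 * π := by
  have h1 : (0 : ℝ) ≤ 1 - u ^ 2 := by nlinarith [hu.1, hu.2]
  have h2 : (0 : ℝ) ≤ 1 - v ^ 2 := by nlinarith [hv.1, hv.2]
  have hcos : Real.cos (Real.arccos u + Real.arccos v) < Real.cos (Real.arccos w) := by
    rw [Real.cos_add, Real.cos_arccos hu.1.le hu.2.le, Real.cos_arccos hv.1.le hv.2.le,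
      Real.cos_arccos hw.1.le hw.2.le, Real.sin_arccos, Real.sin_arccos]
    have hsq : (u * v - w) ^ 2 < (Real.sqrt (1 - u ^ 2) * Real.sqrt (1 - v ^ 2)) ^ 2 := by
      rw [mul_pow, Real.sq_sqrt h1, Real.sq_sqrt h2]; exact h
    have hlt := lt_of_pow_lt_pow_left₀ 2 (by positivity) hsq
    linarith
  exact triAux (arccosIoo hu) (arccosIoo hv) (arccosIoo hw) hcos

set_option maxHeartbeats 2000000 in
/-- Under condition (c2), the numbers `l_μν = arccos (cos r_μ cos r_ν − cos θ_μν sin r_μ sin r_ν)`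
are the side lengths of a nondegenerate spherical triangle. -/
theorem spherical_side_lengths (θ₁₂ θ₂₃ θ₃₁ r₁ r₂ r₃ l₁₂ l₂₃ l₃₁ : ℝ)
    (h₁₂ : θ₁₂ ∈ Set.Ioo 0 π) (h₂₃ : θ₂₃ ∈ Set.Ioo 0 π) (h₃₁ : θ₃₁ ∈ Set.Ioo 0 π)
    (hsum : θ₁₂ + θ₂₃ + θ₃₁ > π)
    (ha : θ₁₂ + θ₂₃ < θ₃₁ + π) (hb : θ₂₃ + θ₃₁ < θ₁₂ + π) (hc : θ₃₁ + θ₁₂ < θ₂₃ + π)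
    (hr₁ : r₁ ∈ Set.Ioo 0 π) (hr₂ : r₂ ∈ Set.Ioo 0 π) (hr₃ : r₃ ∈ Set.Ioo 0 π)
    (hl₁₂ : l₁₂ = arccos (cos r₁ * cos r₂ - cos θ₁₂ * sin r₁ * sin r₂))
    (hl₂₃ : l₂₃ = arccos (cos r₂ * cos r₃ - cos θ₂₃ * sin r₂ * sin r₃))
    (hl₃₁ : l₃₁ = arccos (cos r₃ * cos r₁ - cos θ₃₁ * sin r₃ * sin r₁)) :
    l₁₂ ∈ Set.Ioo 0 π ∧ l₂₃ ∈ Set.Ioo 0 π ∧ l₃₁ ∈ Set.Ioo 0 π ∧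
    l₁₂ + l₂₃ > l₃₁ ∧ l₂₃ + l₃₁ > l₁₂ ∧ l₃₁ + l₁₂ > l₂₃ ∧
    l₁₂ + l₂₃ + l₃₁ < 2 * π := by
  have hA : 0 < sin θ₁₂ := Real.sin_pos_of_pos_of_lt_pi h₁₂.1 h₁₂.2
  have hB : 0 < sin θ₂₃ := Real.sin_pos_of_pos_of_lt_pi h₂₃.1 h₂₃.2
  have hs1 : 0 < sin r₁ := Real.sin_pos_of_pos_of_lt_pi hr₁.1 hr₁.2
  have hs2 : 0 < sin r₂ := Real.sin_pos_of_pos_of_lt_pi hr₂.1 hr₂.2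
  have hs3 : 0 < sin r₃ := Real.sin_pos_of_pos_of_lt_pi hr₃.1 hr₃.2
  have hca := cosIoo h₁₂
  have hcb := cosIoo h₂₃
  have hcd := cosIoo h₃₁
  -- positivity of the Gram determinant of the overlap angles
  have habs : |θ₁₂ - θ₂₃| < π - θ₃₁ := abs_lt.mpr ⟨by linarith, by linarith⟩
  have hup : -cos θ₃₁ < cos θ₁₂ * cos θ₂₃ + sin θ₁₂ * sin θ₂₃ := by
    have h1 : cos (π - θ₃₁) < cos |θ₁₂ - θ₂₃| :=
      Real.strictAntiOn_cos ⟨abs_nonneg _, by linarith [h₃₁.2]⟩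
        ⟨by linarith [h₃₁.2], by linarith [h₃₁.1]⟩ habs
    rw [Real.cos_pi_sub, Real.cos_abs, Real.cos_sub] at h1
    exact h1
  have hlow : cos θ₁₂ * cos θ₂₃ - sin θ₁₂ * sin θ₂₃ < -cos θ₃₁ := by
    rw [← Real.cos_add, ← Real.cos_pi_sub θ₃₁]
    rcases le_or_gt (θ₁₂ + θ₂₃) π with hp | hp
    · exact Real.strictAntiOn_cos ⟨by linarith [h₃₁.2], by linarith [h₃₁.1]⟩
        ⟨by linarith [h₁₂.1, h₂₃.1], hp⟩ (by linarith)
    · have h4 : cos (θ₁₂ + θ₂₃) = cos (2 * π - (θ₁₂ + θ₂₃)) := (Real.cos_two_pi_sub _).symm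
      rw [h4]
      exact Real.strictAntiOn_cos ⟨by linarith [h₃₁.2], by linarith [h₃₁.1]⟩
        ⟨by linarith [h₁₂.2, h₂₃.2], by linarith⟩ (by linarith)
  have hK : (cos θ₁₂ * cos θ₂₃ + cos θ₃₁) ^ 2 < (1 - (cos θ₁₂) ^ 2) * (1 - (cos θ₂₃) ^ 2) := by
    have h3 : (cos θ₁₂ * cos θ₂₃ + cos θ₃₁) ^ 2 < (sin θ₁₂ * sin θ₂₃) ^ 2 :=
      sq_lt_sq' (by linarith) (by linarith)
    have h4 : (sin θ₁₂ * sin θ₂₃) ^ 2 = (1 - (cos θ₁₂) ^ 2) * (1 - (cos θ₂₃) ^ 2) := by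
      rw [mul_pow, Real.sin_sq, Real.sin_sq]
    linarith [h3, h4.symm.le, h4.le]
  have hDT : 0 < (1 - (cos θ₁₂) ^ 2 - (cos θ₂₃) ^ 2 - (cos θ₃₁) ^ 2 - 2 * ((cos θ₁₂) * (cos θ₂₃) * (cos θ₃₁))) := by nlinarith [hK]
  -- Pythagorean identities
  have e1 : (sin r₁) ^ 2 = 1 - (cos r₁) ^ 2 := Real.sin_sq r₁
  have e2 : (sin r₂) ^ 2 = 1 - (cos r₂) ^ 2 := Real.sin_sq r₂
  have e3 : (sin r₃) ^ 2 = 1 - (cos r₃) ^ 2 := Real.sin_sq r₃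
  -- the cosines of the three side lengths lie in (-1, 1)
  have hg12 : (cos r₁ * cos r₂ - cos θ₁₂ * sin r₁ * sin r₂) ∈ Set.Ioo (-1 : ℝ) 1 := by
    constructor
    · nlinarith [Real.neg_one_le_cos (r₁ + r₂), Real.cos_add r₁ r₂, mul_pos hs1 hs2, hca.2]
    · nlinarith [Real.cos_le_one (r₁ - r₂), Real.cos_sub r₁ r₂, mul_pos hs1 hs2, hca.1]
  have hg23 : (cos r₂ * cos r₃ - cos θ₂₃ * sin r₂ * sin r₃) ∈ Set.Ioo (-1 : ℝ) 1 := by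
    constructor
    · nlinarith [Real.neg_one_le_cos (r₂ + r₃), Real.cos_add r₂ r₃, mul_pos hs2 hs3, hcb.2]
    · nlinarith [Real.cos_le_one (r₂ - r₃), Real.cos_sub r₂ r₃, mul_pos hs2 hs3, hcb.1]
  have hg31 : (cos r₃ * cos r₁ - cos θ₃₁ * sin r₃ * sin r₁) ∈ Set.Ioo (-1 : ℝ) 1 := by
    constructor
    · nlinarith [Real.neg_one_le_cos (r₃ + r₁), Real.cos_add r₃ r₁, mul_pos hs3 hs1, hcd.2]
    · nlinarith [Real.cos_le_one (r₃ - r₁), Real.cos_sub r₃ r₁, mul_pos hs3 hs1, hcd.1]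
  -- the Gram-determinant identity for the side-length cosines
  have key : 1 - (cos r₁ * cos r₂ - cos θ₁₂ * sin r₁ * sin r₂) ^ 2 - (cos r₂ * cos r₃ - cos θ₂₃ * sin r₂ * sin r₃) ^ 2 - (cos r₃ * cos r₁ - cos θ₃₁ * sin r₃ * sin r₁) ^ 2 + 2 * ((cos r₁ * cos r₂ - cos θ₁₂ * sin r₁ * sin r₂) * (cos r₂ * cos r₃ - cos θ₂₃ * sin r₂ * sin r₃) * (cos r₃ * cos r₁ - cos θ₃₁ * sin r₃ * sin r₁))
      = ((sin r₁) ^ 2 * (sin r₂) ^ 2 * (sin r₃) ^ 2) * (1 - (cos θ₁₂) ^ 2 - (cos θ₂₃) ^ 2 - (cos θ₃₁) ^ 2 - 2 * ((cos θ₁₂) * (cos θ₂₃) * (cos θ₃₁))) + ((1 - (cos θ₂₃) ^ 2) * ((cos r₁) * (sin r₂) * (sin r₃)) ^ 2 + (1 - (cos θ₃₁) ^ 2) * ((cos r₂) * (sin r₃) * (sin r₁)) ^ 2 + (1 - (cos θ₁₂) ^ 2) * ((cos r₃) * (sin r₁) * (sin r₂)) ^ 2 + 2 * (((cos θ₁₂)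 + (cos θ₂₃) * (cos θ₃₁)) * ((cos r₁) * (sin r₂) * (sin r₃)) * ((cos r₂) * (sin r₃) * (sin r₁)) + ((cos θ₂₃) + (cos θ₁₂) * (cos θ₃₁)) * ((cos r₂) * (sin r₃) * (sin r₁)) * ((cos r₃) * (sin r₁) * (sin r₂)) + ((cos θ₃₁) + (cos θ₁₂) * (cos θ₂₃)) * ((cos r₁) * (sin r₂) * (sin r₃)) * ((cos r₃) * (sin r₁) * (sin r₂)))) := by
    linear_combination ((-1) * (sin r₂) ^ 2 * (sin r₃) ^ 2 + (-1) * (cos r₃) ^ 2 * (sin r₂) ^ 2 + (-1) * (cos r₂) ^ 2 * (sin r₃) ^ 2 + (-1) * (cos θ₃₁) ^ 2 * (sin r₃) ^ 2 + (cos θ₃₁) ^ 2 * (sin r₂) ^ 2 * (sin r₃) ^ 2 + (cos θ₃₁) ^ 2 * (cos r₂) ^ 2 * (sin r₃) ^ 2 + (-2) * (cos θ₂₃) * (cos r₂) * (cos r₃) * (sin r₂) * (sin r₃) + (cos θ₂₃) ^ 2 * (sin r₂) ^ 2 * (sin r₃) ^ 2 + (-1) * (cos θ₁₂) ^ 2 *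 (sin r₂) ^ 2 + (cos θ₁₂) ^ 2 * (sin r₂) ^ 2 * (sin r₃) ^ 2 + (cos θ₁₂) ^ 2 * (cos r₃) ^ 2 * (sin r₂) ^ 2) * e1 + ((-1) * (sin r₃) ^ 2 + (-1) * (cos r₃) ^ 2 + (cos r₁) ^ 2 * (cos r₃) ^ 2 + (-2) * (cos θ₃₁) * (cos r₁) * (cos r₃) * (sin r₁) * (sin r₃) + (cos θ₃₁) ^ 2 * (sin r₃) ^ 2 + (-1) * (cos θ₃₁) ^ 2 * (cos r₁) ^ 2 * (sin r₃) ^ 2 + (-1) * (cos θ₁₂) ^ 2 + (cos θ₁₂) ^ 2 * (sin r₃) ^ 2 + (cos θ₁₂) ^ 2 * (cos r₃) ^ 2 + (cos θ₁₂) ^ 2 * (cos r₁) ^ 2 + (-1) * (cos θ₁₂) ^ 2 * (cos r₁) ^ 2 * (sin r₃) ^ 2 + (-1) * (cos θ₁₂) ^ 2 * (cos r₁) ^ 2 * (cos r₃) ^ 2) * e2 + ((-1) + (cos r₁) ^ 2 * (cos r₂) ^ 2 + (-2) * (cos θ₁₂) * (cos r₁) * (cos r₂) * (sin r₁) * (sin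 r₂) + (cos θ₁₂) ^ 2 + (-1) * (cos θ₁₂) ^ 2 * (cos r₂) ^ 2 + (-1) * (cos θ₁₂) ^ 2 * (cos r₁) ^ 2 + (cos θ₁₂) ^ 2 * (cos r₁) ^ 2 * (cos r₂) ^ 2) * e3
  have hb2 : (0 : ℝ) < 1 - (cos θ₂₃) ^ 2 := by nlinarith [hcb.1, hcb.2]
  have hQid : (1 - (cos θ₂₃) ^ 2) * ((1 - (cos θ₂₃) ^ 2) * ((cos r₁) * (sin r₂) * (sin r₃)) ^ 2 + (1 - (cos θ₃₁) ^ 2) * ((cos r₂) * (sin r₃) * (sin r₁)) ^ 2 + (1 - (cos θ₁₂) ^ 2) * ((cos r₃) * (sin r₁) * (sin r₂)) ^ 2 + 2 * (((cos θ₁₂) + (cos θ₂₃) * (cos θ₃₁)) * ((cos r₁) * (sin r₂) * (sin r₃)) * ((cos r₂) * (sin r₃) * (sin r₁)) + ((cos θ₂₃) + (cos θ₁₂) * (cos θ₃₁)) * ((cos r₂) * (sin r₃) * (sin r₁)) * ((cos r₃) * (sin r₁) * (sin r₂)) + ((cos θ₃₁) + (cos θ₁₂) * (cos θ₂₃)) *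 ((cos r₁) * (sin r₂) * (sin r₃)) * ((cos r₃) * (sin r₁) * (sin r₂))))
      = ((1 - (cos θ₂₃) ^ 2) * ((cos r₁) * (sin r₂) * (sin r₃)) + ((cos θ₁₂) + (cos θ₂₃) * (cos θ₃₁)) * ((cos r₂) * (sin r₃) * (sin r₁)) + ((cos θ₃₁) + (cos θ₁₂) * (cos θ₂₃)) * ((cos r₃) * (sin r₁) * (sin r₂))) ^ 2 + (1 - (cos θ₁₂) ^ 2 - (cos θ₂₃) ^ 2 - (cos θ₃₁) ^ 2 - 2 * ((cos θ₁₂) * (cos θ₂₃) * (cos θ₃₁))) * ((((cos r₂) * (sin r₃) * (sin r₁)) + (cos θ₂₃) * ((cos r₃) * (sin r₁) * (sin r₂))) ^ 2 + (1 - (cos θ₂₃) ^ 2) * ((cos r₃) * (sin r₁) * (sin r₂)) ^ 2) := by ring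
  have hQ : (0 : ℝ) ≤ ((1 - (cos θ₂₃) ^ 2) * ((cos r₁) * (sin r₂) * (sin r₃)) ^ 2 + (1 - (cos θ₃₁) ^ 2) * ((cos r₂) * (sin r₃) * (sin r₁)) ^ 2 + (1 - (cos θ₁₂) ^ 2) * ((cos r₃) * (sin r₁) * (sin r₂)) ^ 2 + 2 * (((cos θ₁₂) + (cos θ₂₃) * (cos θ₃₁)) * ((cos r₁) * (sin r₂) * (sin r₃)) * ((cos r₂) * (sin r₃) * (sin r₁)) + ((cos θ₂₃) + (cos θ₁₂) * (cos θ₃₁)) * ((cos r₂) * (sin r₃) * (sin r₁)) * ((cos r₃) * (sin r₁) * (sin r₂)) + ((cos θ₃₁) + (cos θ₁₂) * (cos θ₂₃)) * ((cos r₁) * (sin r₂) * (sin r₃)) * ((cos r₃) * (sin r₁) * (sin r₂)))) := by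
    have hR : (0 : ℝ) ≤ ((1 - (cos θ₂₃) ^ 2) * ((cos r₁) * (sin r₂) * (sin r₃)) + ((cos θ₁₂) + (cos θ₂₃) * (cos θ₃₁)) * ((cos r₂) * (sin r₃) * (sin r₁)) + ((cos θ₃₁) + (cos θ₁₂) * (cos θ₂₃)) * ((cos r₃) * (sin r₁) * (sin r₂))) ^ 2 + (1 - (cos θ₁₂) ^ 2 - (cos θ₂₃) ^ 2 - (cos θ₃₁) ^ 2 - 2 * ((cos θ₁₂) * (cos θ₂₃) * (cos θ₃₁))) * ((((cos r₂) * (sin r₃) * (sin r₁)) + (cos θ₂₃) * ((cos r₃) * (sin r₁) * (sin r₂))) ^ 2 + (1 - (cos θ₂₃) ^ 2) * ((cos r₃) * (sin r₁) * (sin r₂)) ^ 2) :=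
      add_nonneg (sq_nonneg _) (mul_nonneg hDT.le
        (add_nonneg (sq_nonneg _) (mul_nonneg hb2.le (sq_nonneg _))))
    have hR' : (0 : ℝ) ≤ (1 - (cos θ₂₃) ^ 2) * ((1 - (cos θ₂₃) ^ 2) * ((cos r₁) * (sin r₂) * (sin r₃)) ^ 2 + (1 - (cos θ₃₁) ^ 2) * ((cos r₂) * (sin r₃) * (sin r₁)) ^ 2 + (1 - (cos θ₁₂) ^ 2) * ((cos r₃) * (sin r₁) * (sin r₂)) ^ 2 + 2 * (((cos θ₁₂) + (cos θ₂₃) * (cos θ₃₁)) * ((cos r₁) * (sin r₂) * (sin r₃)) * ((cos r₂) * (sin r₃) * (sin r₁)) + ((cos θ₂₃) + (cos θ₁₂) * (cos θ₃₁)) * ((cos r₂) * (sin r₃) * (sin r₁)) * ((cos r₃) * (sin r₁) * (sin r₂)) + ((cos θ₃₁) + (cos θ₁₂) * (cos θ₂₃)) * ((cos r₁) * (sin r₂) * (sin r₃)) * ((cos r₃) * (sin r₁) * (sin r₂)))) := by rw [hQid]; exact hR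
    exact (mul_nonneg_iff_of_pos_left hb2).mp hR'
  have hSpos : (0 : ℝ) < ((sin r₁) ^ 2 * (sin r₂) ^ 2 * (sin r₃) ^ 2) := by positivity
  have hD : 0 < 1 - (cos r₁ * cos r₂ - cos θ₁₂ * sin r₁ * sin r₂) ^ 2 - (cos r₂ * cos r₃ - cos θ₂₃ * sin r₂ * sin r₃) ^ 2 - (cos r₃ * cos r₁ - cos θ₃₁ * sin r₃ * sin r₁) ^ 2 + 2 * ((cos r₁ * cos r₂ - cos θ₁₂ * sin r₁ * sin r₂) * (cos r₂ * cos r₃ - cos θ₂₃ * sin r₂ * sin r₃) * (cos r₃ * cos r₁ - cos θ₃₁ * sin r₃ * sin r₁)) := by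
    rw [key]; exact add_pos_of_pos_of_nonneg (mul_pos hSpos hDT) hQ
  set g12 : ℝ := cos r₁ * cos r₂ - cos θ₁₂ * sin r₁ * sin r₂ with hg12def
  set g23 : ℝ := cos r₂ * cos r₃ - cos θ₂₃ * sin r₂ * sin r₃ with hg23def
  set g31 : ℝ := cos r₃ * cos r₁ - cos θ₃₁ * sin r₃ * sin r₁ with hg31def
  have p1 : (g12 * g23 - g31) ^ 2 < (1 - g12 ^ 2) * (1 - g23 ^ 2) := by nlinarith [hD]
  have p2 : (g23 * g31 - g12) ^ 2 < (1 - g23 ^ 2) * (1 - g31 ^ 2) := by nlinarith [hD]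
  have p3 : (g31 * g12 - g23) ^ 2 < (1 - g31 ^ 2) * (1 - g12 ^ 2) := by nlinarith [hD]
  obtain ⟨T1, S1⟩ := pairAux hg12 hg23 hg31 p1
  obtain ⟨T2, S2⟩ := pairAux hg23 hg31 hg12 p2
  obtain ⟨T3, S3⟩ := pairAux hg31 hg12 hg23 p3
  subst hl₁₂ hl₂₃ hl₃₁
  exact ⟨arccosIoo hg12, arccosIoo hg23, arccosIoo hg31, T1, T2, T3, S1⟩
end

section
/- Let θ₁₂, θ₂₃, θ₃₁ ∈ (0,π) satisfy θ₁₂+θ₂₃+θ₃₁ > π, θ₁₂+θ₂₃ < θ₃₁+π, θ₂₃+θ₃₁ < θ₁₂+π, and θ₃₁+θ₁₂ < θ₂₃+π, and let r₁, r₂, r₃ ∈ (0,π). Then there exist unit vectors z₁, z₂, z₃ ∈ ℝ³ such that ⟪z_μ, z_ν⟫ = cos r_μ cos r_ν − cos θ_μν · sin r_μ sin r_ν for every pair (μ,ν) ∈ {(1,2),(2,3),(3,1)}; any such z₁, z₂, z₃ are linearly independent; and if (z₁, z₂, z₃) and (z₁', z₂', z₃') are two such triples, then there is a linear isometry of ℝ³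 sending z_μ to z_μ' for μ = 1,2,3. -/
open Real

set_option maxHeartbeats 1000000


lemma cos_bounds {θ : ℝ} (h : θ ∈ Set.Ioo 0 π) : -1 < cos θ ∧ cos θ < 1 :=
  ⟨by simpa using Real.cos_lt_cos_of_nonneg_of_le_pi h.1.le le_rfl h.2,
   by simpa using Real.cos_lt_cos_of_nonneg_of_le_pi le_rfl h.2.le h.1⟩

lemma gram_det_pos (θ₁₂ θ₂₃ θ₃₁ r₁ r₂ r₃ : ℝ)
    (h₁₂ : θ₁₂ ∈ Set.Ioo 0 π) (h₂₃ : θ₂₃ ∈ Set.Ioo 0 π) (h₃₁ : θ₃₁ ∈ Set.Ioo 0 π)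
    (hsum : θ₁₂ + θ₂₃ + θ₃₁ > π)
    (ha : θ₁₂ + θ₂₃ < θ₃₁ + π) (hb : θ₂₃ + θ₃₁ < θ₁₂ + π) (hc : θ₃₁ + θ₁₂ < θ₂₃ + π)
    (hr₁ : r₁ ∈ Set.Ioo 0 π) (hr₂ : r₂ ∈ Set.Ioo 0 π) (hr₃ : r₃ ∈ Set.Ioo 0 π) :
    0 < 1 - (cos r₁ * cos r₂ - cos θ₁₂ * sin r₁ * sin r₂)^2
          - (cos r₂ * cos r₃ - cos θ₂₃ * sin r₂ * sin r₃)^2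
          - (cos r₃ * cos r₁ - cos θ₃₁ * sin r₃ * sin r₁)^2
        + 2 * (cos r₁ * cos r₂ - cos θ₁₂ * sin r₁ * sin r₂)
            * (cos r₂ * cos r₃ - cos θ₂₃ * sin r₂ * sin r₃)
            * (cos r₃ * cos r₁ - cos θ₃₁ * sin r₃ * sin r₁) := by
  obtain ⟨hk12l, hk12u⟩ := cos_bounds h₁₂
  obtain ⟨hk23l, hk23u⟩ := cos_bounds h₂₃
  obtain ⟨hk31l, hk31u⟩ := cos_bounds h₃₁
  have hs1 : 0 < sin r₁ := Real.sin_pos_of_pos_of_lt_pi hr₁.1 hr₁.2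
  have hs2 : 0 < sin r₂ := Real.sin_pos_of_pos_of_lt_pi hr₂.1 hr₂.2
  have hs3 : 0 < sin r₃ := Real.sin_pos_of_pos_of_lt_pi hr₃.1 hr₃.2
  have p1 := Real.sin_sq_add_cos_sq r₁
  have p2 := Real.sin_sq_add_cos_sq r₂
  have p3 := Real.sin_sq_add_cos_sq r₃
  set c1 := cos r₁; set c2 := cos r₂; set c3 := cos r₃
  set s1 := sin r₁; set s2 := sin r₂; set s3 := sin r₃
  set k12 := cos θ₁₂; set k23 := cos θ₂₃; set k31 := cos θ₃₁
  -- positivity of Dn = det of the "angle" Gram matrix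
  have hP : cos θ₁₂ + cos (θ₂₃ + θ₃₁) < 0 := by
    rw [Real.cos_add_cos]
    have h1 : cos ((θ₁₂ + (θ₂₃ + θ₃₁))/2) < 0 := by
      apply Real.cos_neg_of_pi_div_two_lt_of_lt <;> nlinarith [h₁₂.1, h₁₂.2, h₂₃.1, h₂₃.2, h₃₁.1, h₃₁.2, Real.pi_pos]
    have h2 : 0 < cos ((θ₁₂ - (θ₂₃ + θ₃₁))/2) := by
      apply Real.cos_pos_of_mem_Ioo
      constructor <;> nlinarith [h₁₂.1, h₁₂.2, h₂₃.1, h₂₃.2, h₃₁.1, h₃₁.2]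
    nlinarith [h1, h2]
  have hQ : 0 < cos θ₁₂ + cos (θ₂₃ - θ₃₁) := by
    rw [Real.cos_add_cos]
    have h1 : 0 < cos ((θ₁₂ + (θ₂₃ - θ₃₁))/2) := by
      apply Real.cos_pos_of_mem_Ioo
      constructor <;> nlinarith [h₁₂.1, h₁₂.2, h₂₃.1, h₂₃.2, h₃₁.1, h₃₁.2]
    have h2 : 0 < cos ((θ₁₂ - (θ₂₃ - θ₃₁))/2) := by
      apply Real.cos_pos_of_mem_Ioo
      constructor <;> nlinarith [h₁₂.1, h₁₂.2, h₂₃.1, h₂₃.2, h₃₁.1, h₃₁.2]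
    positivity
  rw [Real.cos_add] at hP
  rw [Real.cos_sub] at hQ
  have q2 := Real.sin_sq_add_cos_sq θ₂₃
  have q3 := Real.sin_sq_add_cos_sq θ₃₁
  have hDn : 0 < 1 - k12^2 - k23^2 - k31^2 - 2*k12*k23*k31 := by
    have hPQ : 0 < (sin θ₂₃ * sin θ₃₁ - k23 * k31 - k12) * (k12 + (k23 * k31 + sin θ₂₃ * sin θ₃₁)) := by
      apply mul_pos <;> · linarith [hP, hQ]
    nlinarith [hPQ, q2, q3]
  have hM : 0 < 1 - k23^2 := by nlinarith
  -- the big identity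
  have key : (1 - k23^2) *
      (1 - (c1*c2 - k12*s1*s2)^2 - (c2*c3 - k23*s2*s3)^2 - (c3*c1 - k31*s3*s1)^2
        + 2*(c1*c2 - k12*s1*s2)*(c2*c3 - k23*s2*s3)*(c3*c1 - k31*s3*s1))
    = (1 - k23^2) * (s1*s2*s3)^2 * (1 - k12^2 - k23^2 - k31^2 - 2*k12*k23*k31)
      + ((1-k23^2)*(c1*s2*s3) + (k12+k23*k31)*(c2*s1*s3) + (k31+k12*k23)*(c3*s1*s2))^2
      + (1 - k12^2 - k23^2 - k31^2 - 2*k12*k23*k31) * ((c2*s1*s3) + k23*(c3*s1*s2))^2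
      + (1 - k12^2 - k23^2 - k31^2 - 2*k12*k23*k31) * (1-k23^2) * (c3*s1*s2)^2 := by
    linear_combination
      ((-1)*s2^2*s3^2 + (2)*s2^2*s3^2*k23^2 + (-1)*s2^2*s3^2*k23^4 + (-1)*c3^2 + (1)*c3^2*k23^2 + (-2)*c2*c3*s2*s3*k23 + (2)*c2*c3*s2*s3*k23^3 + (-1)*c2^2 + (1)*c2^2*k23^2 + (2)*c2^2*c3^2 + (-2)*c2^2*c3^2*k23^2) * p1
      + ((-1) + (1)*k23^2 + (1)*s1^2 + (-1)*s1^2*k23^2 + (-1)*s1^2*s3^2 + (1)*s1^2*s3^2*k31^2 + (1)*s1^2*s3^2*k23^2 + (-1)*s1^2*s3^2*k23^2*k31^2 + (1)*c3^2 + (-1)*c3^2*k23^2 + (-2)*c3^2*s1^2 + (2)*c3^2*s1^2*k23^2 + (-2)*c1*c3*s1*s3*k31 + (2)*c1*c3*s1*s3*k23^2*k31) * p2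
      + ((-1)*s2^2 + (1)*s2^2*k23^2 + (-1)*s1^2 + (1)*s1^2*k23^2 + (1)*s1^2*s2^2 + (-1)*s1^2*s2^2*k23^2 + (1)*s1^2*s2^2*k12^2 + (-1)*s1^2*s2^2*k12^2*k23^2 + (-2)*c1*c2*s1*s2*k12 + (2)*c1*c2*s1*s2*k12*k23^2) * p3
  have hRHS : 0 < (1 - k23^2) *
      (1 - (c1*c2 - k12*s1*s2)^2 - (c2*c3 - k23*s2*s3)^2 - (c3*c1 - k31*s3*s1)^2
        + 2*(c1*c2 - k12*s1*s2)*(c2*c3 - k23*s2*s3)*(c3*c1 - k31*s3*s1)) := by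
    rw [key]
    have t1 : 0 < (1 - k23^2) * (s1*s2*s3)^2 * (1 - k12^2 - k23^2 - k31^2 - 2*k12*k23*k31) :=
      mul_pos (mul_pos hM (by positivity)) hDn
    exact add_pos_of_pos_of_nonneg (add_pos_of_pos_of_nonneg (add_pos_of_pos_of_nonneg t1
      (sq_nonneg _)) (mul_nonneg hDn.le (sq_nonneg _)))
      (mul_nonneg (mul_nonneg hDn.le hM.le) (sq_nonneg _))
  have hfin := div_pos hRHS hM
  rwa [mul_div_cancel_left₀ _ (ne_of_gt hM)] at hfin

noncomputable def mkE (x y z : ℝ) : EuclideanSpace ℝ (Fin 3) :=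
  (WithLp.equiv 2 (Fin 3 → ℝ)).symm ![x, y, z]

lemma inner_mkE (x y z x' y' z' : ℝ) :
    (inner ℝ (mkE x y z) (mkE x' y' z') : ℝ) = x*x' + y*y' + z*z' := by
  simp [mkE, PiLp.inner_apply, Fin.sum_univ_three]; ring

lemma norm_one_of_inner_self {v : EuclideanSpace ℝ (Fin 3)} (h : (inner ℝ v v : ℝ) = 1) :
    ‖v‖ = 1 := by
  have h2 : ‖v‖ ^ 2 = 1 := by rw [← real_inner_self_eq_norm_sq]; exact h
  nlinarith [norm_nonneg v]

lemma exists_gram (a b c : ℝ) (ha2 : a^2 < 1)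
    (hD : 0 < 1 - a^2 - b^2 - c^2 + 2*a*b*c) :
    ∃ z₁ z₂ z₃ : EuclideanSpace ℝ (Fin 3),
      ‖z₁‖ = 1 ∧ ‖z₂‖ = 1 ∧ ‖z₃‖ = 1 ∧
      (inner ℝ z₁ z₂ : ℝ) = a ∧ (inner ℝ z₂ z₃ : ℝ) = b ∧ (inner ℝ z₃ z₁ : ℝ) = c := by
  have h1a : 0 < 1 - a^2 := by linarith
  set u : ℝ := Real.sqrt (1 - a^2) with hu_def
  have hu : 0 < u := Real.sqrt_pos.mpr h1a
  have hu2 : u^2 = 1 - a^2 := Real.sq_sqrt h1a.le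
  set β : ℝ := (b - a*c)/u with hβ_def
  have hβ : u * β = b - a*c := by rw [hβ_def]; field_simp
  have hβ2 : β^2 = (b - a*c)^2/(1 - a^2) := by rw [hβ_def, div_pow, hu2]
  have h5 : 1 - c^2 - β^2 = (1 - a^2 - b^2 - c^2 + 2*a*b*c)/(1 - a^2) := by
    rw [hβ2]; field_simp; ring
  have hγnn : 0 ≤ 1 - c^2 - β^2 := by rw [h5]; positivity
  set γ : ℝ := Real.sqrt (1 - c^2 - β^2) with hγ_def
  have hγ2 : γ^2 = 1 - c^2 - β^2 := Real.sq_sqrt hγnn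
  refine ⟨mkE 1 0 0, mkE a u 0, mkE c β γ, ?_, ?_, ?_, ?_, ?_, ?_⟩
  · exact norm_one_of_inner_self (by rw [inner_mkE]; ring)
  · exact norm_one_of_inner_self (by rw [inner_mkE]; linear_combination hu2)
  · exact norm_one_of_inner_self (by rw [inner_mkE]; linear_combination hγ2)
  · rw [inner_mkE]; ring
  · rw [inner_mkE]; linear_combination hβ
  · rw [inner_mkE]; ring

lemma indep_gram (a b c : ℝ) (hD : 0 < 1 - a^2 - b^2 - c^2 + 2*a*b*c)
    (z₁ z₂ z₃ : EuclideanSpace ℝ (Fin 3))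
    (h₁ : ‖z₁‖ = 1) (h₂ : ‖z₂‖ = 1) (h₃ : ‖z₃‖ = 1)
    (h12 : (inner ℝ z₁ z₂ : ℝ) = a) (h23 : (inner ℝ z₂ z₃ : ℝ) = b)
    (h31 : (inner ℝ z₃ z₁ : ℝ) = c) :
    LinearIndependent ℝ ![z₁, z₂, z₃] := by
  have hz1 : (inner ℝ z₁ z₁ : ℝ) = 1 := by rw [real_inner_self_eq_norm_sq, h₁]; norm_num
  have hz2 : (inner ℝ z₂ z₂ : ℝ) = 1 := by rw [real_inner_self_eq_norm_sq, h₂]; norm_num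
  have hz3 : (inner ℝ z₃ z₃ : ℝ) = 1 := by rw [real_inner_self_eq_norm_sq, h₃]; norm_num
  have h21 : (inner ℝ z₂ z₁ : ℝ) = a := by rw [real_inner_comm]; exact h12
  have h32 : (inner ℝ z₃ z₂ : ℝ) = b := by rw [real_inner_comm]; exact h23
  have h13 : (inner ℝ z₁ z₃ : ℝ) = c := by rw [real_inner_comm]; exact h31
  have hD0 : (1 - a^2 - b^2 - c^2 + 2*a*b*c) ≠ 0 := ne_of_gt hD
  apply Fintype.linearIndependent_iff.mpr
  intro g hg
  simp only [Fin.sum_univ_three, Matrix.cons_val_zero, Matrix.cons_val_one, Matrix.head_cons,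
    Matrix.cons_val_two, Matrix.tail_cons] at hg
  have E1 : g 0 + g 1 * a + g 2 * c = 0 := by
    have h := congrArg (fun w : EuclideanSpace ℝ (Fin 3) => (inner ℝ z₁ w : ℝ)) hg
    simp only [inner_add_right, real_inner_smul_right, inner_zero_right] at h
    rw [hz1, h12, h13] at h; linarith
  have E2 : g 0 * a + g 1 + g 2 * b = 0 := by
    have h := congrArg (fun w : EuclideanSpace ℝ (Fin 3) => (inner ℝ z₂ w : ℝ)) hg
    simp only [inner_add_right, real_inner_smul_right, inner_zero_right] at h
    rw [hz2, h21, h23] at h; linarith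
  have E3 : g 0 * c + g 1 * b + g 2 = 0 := by
    have h := congrArg (fun w : EuclideanSpace ℝ (Fin 3) => (inner ℝ z₃ w : ℝ)) hg
    simp only [inner_add_right, real_inner_smul_right, inner_zero_right] at h
    rw [hz3, h31, h32] at h; linarith
  have hg0 : g 0 = 0 := by
    have h : (1 - a^2 - b^2 - c^2 + 2*a*b*c) * g 0 = 0 := by
      linear_combination (1 - b^2) * E1 + (b*c - a) * E2 + (a*b - c) * E3
    exact (mul_eq_zero.mp h).resolve_left hD0
  have hg1 : g 1 = 0 := by
    have h : (1 - a^2 - b^2 - c^2 + 2*a*b*c) * g 1 = 0 := by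
      linear_combination (b*c - a) * E1 + (1 - c^2) * E2 + (a*c - b) * E3
    exact (mul_eq_zero.mp h).resolve_left hD0
  have hg2 : g 2 = 0 := by
    have h : (1 - a^2 - b^2 - c^2 + 2*a*b*c) * g 2 = 0 := by
      linear_combination (a*b - c) * E1 + (a*c - b) * E2 + (1 - a^2) * E3
    exact (mul_eq_zero.mp h).resolve_left hD0
  intro i
  fin_cases i
  · exact hg0
  · exact hg1
  · exact hg2

lemma iso_gram (a b c : ℝ) (hD : 0 < 1 - a^2 - b^2 - c^2 + 2*a*b*c)
    (z₁ z₂ z₃ z₁' z₂' z₃' : EuclideanSpace ℝ (Fin 3))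
    (h₁ : ‖z₁‖ = 1) (h₂ : ‖z₂‖ = 1) (h₃ : ‖z₃‖ = 1)
    (h12 : (inner ℝ z₁ z₂ : ℝ) = a) (h23 : (inner ℝ z₂ z₃ : ℝ) = b)
    (h31 : (inner ℝ z₃ z₁ : ℝ) = c)
    (h₁' : ‖z₁'‖ = 1) (h₂' : ‖z₂'‖ = 1) (h₃' : ‖z₃'‖ = 1)
    (h12' : (inner ℝ z₁' z₂' : ℝ) = a) (h23' : (inner ℝ z₂' z₃' : ℝ) = b)
    (h31' : (inner ℝ z₃' z₁' : ℝ) = c) :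
    ∃ f : EuclideanSpace ℝ (Fin 3) ≃ₗᵢ[ℝ] EuclideanSpace ℝ (Fin 3),
      f z₁ = z₁' ∧ f z₂ = z₂' ∧ f z₃ = z₃' := by
  have li : LinearIndependent ℝ ![z₁, z₂, z₃] :=
    indep_gram a b c hD z₁ z₂ z₃ h₁ h₂ h₃ h12 h23 h31
  have li' : LinearIndependent ℝ ![z₁', z₂', z₃'] :=
    indep_gram a b c hD z₁' z₂' z₃' h₁' h₂' h₃' h12' h23' h31'
  let B : Module.Basis (Fin 3) ℝ (EuclideanSpace ℝ (Fin 3)) :=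
    basisOfLinearIndependentOfCardEqFinrank li (by simp)
  let B' : Module.Basis (Fin 3) ℝ (EuclideanSpace ℝ (Fin 3)) :=
    basisOfLinearIndependentOfCardEqFinrank li' (by simp)
  have hB : ∀ i, B i = ![z₁, z₂, z₃] i := fun i => by
    simp [B, coe_basisOfLinearIndependentOfCardEqFinrank]
  have hB' : ∀ i, B' i = ![z₁', z₂', z₃'] i := fun i => by
    simp [B', coe_basisOfLinearIndependentOfCardEqFinrank]
  set f : EuclideanSpace ℝ (Fin 3) ≃ₗ[ℝ] EuclideanSpace ℝ (Fin 3) :=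
    B.equiv B' (Equiv.refl _) with hf_def
  have hfB : ∀ i, f (B i) = B' i := fun i => by simp [hf_def]
  have hgram : ∀ i j, (inner ℝ (B' i) (B' j) : ℝ) = inner ℝ (B i) (B j) := by
    have hz1 : (inner ℝ z₁ z₁ : ℝ) = 1 := by rw [real_inner_self_eq_norm_sq, h₁]; norm_num
    have hz2 : (inner ℝ z₂ z₂ : ℝ) = 1 := by rw [real_inner_self_eq_norm_sq, h₂]; norm_num
    have hz3 : (inner ℝ z₃ z₃ : ℝ) = 1 := by rw [real_inner_self_eq_norm_sq, h₃]; norm_num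
    have h21 : (inner ℝ z₂ z₁ : ℝ) = a := by rw [real_inner_comm]; exact h12
    have h32 : (inner ℝ z₃ z₂ : ℝ) = b := by rw [real_inner_comm]; exact h23
    have h13 : (inner ℝ z₁ z₃ : ℝ) = c := by rw [real_inner_comm]; exact h31
    have hz1' : (inner ℝ z₁' z₁' : ℝ) = 1 := by rw [real_inner_self_eq_norm_sq, h₁']; norm_num
    have hz2' : (inner ℝ z₂' z₂' : ℝ) = 1 := by rw [real_inner_self_eq_norm_sq, h₂']; norm_num
    have hz3' : (inner ℝ z₃' z₃' : ℝ) = 1 := by rw [real_inner_self_eq_norm_sq, h₃']; norm_num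
    have h21' : (inner ℝ z₂' z₁' : ℝ) = a := by rw [real_inner_comm]; exact h12'
    have h32' : (inner ℝ z₃' z₂' : ℝ) = b := by rw [real_inner_comm]; exact h23'
    have h13' : (inner ℝ z₁' z₃' : ℝ) = c := by rw [real_inner_comm]; exact h31'
    intro i j
    fin_cases i <;> fin_cases j <;>
      simp [hB, hB', hz1, hz2, hz3, h12, h23, h31, h21, h32, h13,
        hz1', hz2', hz3', h12', h23', h31', h21', h32', h13', h₁, h₂, h₃, h₁', h₂', h₃']
  have hinner : ∀ x y : EuclideanSpace ℝ (Fin 3), (inner ℝ (f x) (f y) : ℝ) = inner ℝ x y := by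
    intro x y
    rw [← B.sum_repr x, ← B.sum_repr y]
    simp only [map_sum, LinearEquiv.map_smul, sum_inner, inner_sum,
      real_inner_smul_left, real_inner_smul_right]
    refine Finset.sum_congr rfl fun i _ => Finset.sum_congr rfl fun j _ => ?_
    rw [hfB, hfB, hgram]
  refine ⟨f.isometryOfInner hinner, ?_, ?_, ?_⟩
  · show f z₁ = z₁'
    have := hfB 0; rw [hB 0] at this; rw [hB' 0] at this; simpa using this
  · show f z₂ = z₂'
    have := hfB 1; rw [hB 1] at this; rw [hB' 1] at this; simpa using this
  · show f z₃ = z₃'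
    have := hfB 2; rw [hB 2] at this; rw [hB' 2] at this; simpa using this

lemma cos_bounds' {θ : ℝ} (h : θ ∈ Set.Ioo 0 π) : -1 < cos θ ∧ cos θ < 1 :=
  ⟨by simpa using Real.cos_lt_cos_of_nonneg_of_le_pi h.1.le le_rfl h.2,
   by simpa using Real.cos_lt_cos_of_nonneg_of_le_pi le_rfl h.2.le h.1⟩

lemma t_sq_lt_one {θ r₁ r₂ : ℝ} (hθ : θ ∈ Set.Ioo 0 π)
    (hr₁ : r₁ ∈ Set.Ioo 0 π) (hr₂ : r₂ ∈ Set.Ioo 0 π) :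
    (cos r₁ * cos r₂ - cos θ * sin r₁ * sin r₂)^2 < 1 := by
  obtain ⟨hkl, hku⟩ := cos_bounds' hθ
  have hs1 : 0 < sin r₁ := Real.sin_pos_of_pos_of_lt_pi hr₁.1 hr₁.2
  have hs2 : 0 < sin r₂ := Real.sin_pos_of_pos_of_lt_pi hr₂.1 hr₂.2
  have p1 := Real.sin_sq_add_cos_sq r₁
  have p2 := Real.sin_sq_add_cos_sq r₂
  have h1k : 0 < 1 + cos θ := by linarith
  have h2k : 0 < 1 - cos θ := by linarith
  nlinarith [mul_nonneg h1k.le (sq_nonneg (sin r₁ * cos r₂ + sin r₂ * cos r₁)),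
    mul_nonneg h2k.le (sq_nonneg (sin r₁ * cos r₂ - sin r₂ * cos r₁)),
    mul_pos (mul_pos h1k h2k) (mul_pos (mul_pos hs1 hs2) (mul_pos hs1 hs2))]

/-- Lemma 4.1 (existence, nondegeneracy and uniqueness of the three-circle
configuration): under condition (c2), for any radii `r₁, r₂, r₃ ∈ (0,π)` there exist
unit vectors realizing the required inner ℝ products (the centers of the caps); any such
centers are linearly independent; and the configuration is unique up to a linear
isometry of `ℝ³`. -/
theorem three_circle_configuration (θ₁₂ θ₂₃ θ₃₁ r₁ r₂ r₃ : ℝ)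
    (h₁₂ : θ₁₂ ∈ Set.Ioo 0 π) (h₂₃ : θ₂₃ ∈ Set.Ioo 0 π) (h₃₁ : θ₃₁ ∈ Set.Ioo 0 π)
    (hsum : θ₁₂ + θ₂₃ + θ₃₁ > π)
    (ha : θ₁₂ + θ₂₃ < θ₃₁ + π) (hb : θ₂₃ + θ₃₁ < θ₁₂ + π) (hc : θ₃₁ + θ₁₂ < θ₂₃ + π)
    (hr₁ : r₁ ∈ Set.Ioo 0 π) (hr₂ : r₂ ∈ Set.Ioo 0 π) (hr₃ : r₃ ∈ Set.Ioo 0 π) :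
    (∃ z₁ z₂ z₃ : EuclideanSpace ℝ (Fin 3),
        ‖z₁‖ = 1 ∧ ‖z₂‖ = 1 ∧ ‖z₃‖ = 1 ∧
        (inner ℝ z₁ z₂ : ℝ) = cos r₁ * cos r₂ - cos θ₁₂ * sin r₁ * sin r₂ ∧
        (inner ℝ z₂ z₃ : ℝ) = cos r₂ * cos r₃ - cos θ₂₃ * sin r₂ * sin r₃ ∧
        (inner ℝ z₃ z₁ : ℝ) = cos r₃ * cos r₁ - cos θ₃₁ * sin r₃ * sin r₁) ∧
    (∀ z₁ z₂ z₃ : EuclideanSpace ℝ (Fin 3),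
        ‖z₁‖ = 1 → ‖z₂‖ = 1 → ‖z₃‖ = 1 →
        (inner ℝ z₁ z₂ : ℝ) = cos r₁ * cos r₂ - cos θ₁₂ * sin r₁ * sin r₂ →
        (inner ℝ z₂ z₃ : ℝ) = cos r₂ * cos r₃ - cos θ₂₃ * sin r₂ * sin r₃ →
        (inner ℝ z₃ z₁ : ℝ) = cos r₃ * cos r₁ - cos θ₃₁ * sin r₃ * sin r₁ →
        LinearIndependent ℝ ![z₁, z₂, z₃]) ∧
    (∀ z₁ z₂ z₃ z₁' z₂' z₃' : EuclideanSpace ℝ (Fin 3),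
        ‖z₁‖ = 1 → ‖z₂‖ = 1 → ‖z₃‖ = 1 →
        (inner ℝ z₁ z₂ : ℝ) = cos r₁ * cos r₂ - cos θ₁₂ * sin r₁ * sin r₂ →
        (inner ℝ z₂ z₃ : ℝ) = cos r₂ * cos r₃ - cos θ₂₃ * sin r₂ * sin r₃ →
        (inner ℝ z₃ z₁ : ℝ) = cos r₃ * cos r₁ - cos θ₃₁ * sin r₃ * sin r₁ →
        ‖z₁'‖ = 1 → ‖z₂'‖ = 1 → ‖z₃'‖ = 1 →
        (inner ℝ z₁' z₂' : ℝ) = cos r₁ * cos r₂ - cos θ₁₂ * sin r₁ * sin r₂ →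
        (inner ℝ z₂' z₃' : ℝ) = cos r₂ * cos r₃ - cos θ₂₃ * sin r₂ * sin r₃ →
        (inner ℝ z₃' z₁' : ℝ) = cos r₃ * cos r₁ - cos θ₃₁ * sin r₃ * sin r₁ →
        ∃ f : EuclideanSpace ℝ (Fin 3) ≃ₗᵢ[ℝ] EuclideanSpace ℝ (Fin 3),
          f z₁ = z₁' ∧ f z₂ = z₂' ∧ f z₃ = z₃') := by
  have hD := gram_det_pos θ₁₂ θ₂₃ θ₃₁ r₁ r₂ r₃ h₁₂ h₂₃ h₃₁ hsum ha hb hc hr₁ hr₂ hr₃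
  refine ⟨?_, ?_, ?_⟩
  · exact exists_gram _ _ _ (t_sq_lt_one h₁₂ hr₁ hr₂) hD
  · intro z₁ z₂ z₃ h₁ h₂ h₃ e1 e2 e3
    exact indep_gram _ _ _ hD z₁ z₂ z₃ h₁ h₂ h₃ e1 e2 e3
  · intro z₁ z₂ z₃ z₁' z₂' z₃' h₁ h₂ h₃ e1 e2 e3 h₁' h₂' h₃' e1' e2' e3'
    exact iso_gram _ _ _ hD z₁ z₂ z₃ z₁' z₂' z₃' h₁ h₂ h₃ e1 e2 e3 h₁' h₂' h₃' e1' e2' e3'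
end

section
/- Let θ₁₂, θ₂₃, θ₃₁ ∈ (0,π) satisfy θ₁₂+θ₂₃+θ₃₁ > π, θ₁₂+θ₂₃ < θ₃₁+π, θ₂₃+θ₃₁ < θ₁₂+π, and θ₃₁+θ₁₂ < θ₂₃+π, let r₁, r₂, r₃ ∈ (0,π), and let z₁, z₂, z₃ be unit vectors in ℝ³ with ⟪z_μ, z_ν⟫ = cos r_μ cos r_ν − cos θ_μν · sin r_μ sin r_ν for every pair (μ,ν) ∈ {(1,2),(2,3),(3,1)}. Then there is no unit vector x ∈ ℝ³ with ⟪x, z_μ⟫ = cos r_μ simultaneously for μ = 1, 2, 3; that is, the three boundary circles of the caps D(z₁,r₁), D(z₂,r₂), D(z₃,r₃) have empty common intersection. -/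
open Real
set_option maxHeartbeats 1000000

lemma det_pos_aux (α β γ : ℝ)
    (hα : α ∈ Set.Ioo 0 π) (hβ : β ∈ Set.Ioo 0 π) (hγ : γ ∈ Set.Ioo 0 π)
    (hsum : α + β + γ > π)
    (h1 : α + β < γ + π) (h2 : β + γ < α + π) (h3 : γ + α < β + π) :
    0 < 1 - cos α ^ 2 - cos β ^ 2 - cos γ ^ 2 - 2 * cos α * cos β * cos γ := by
  obtain ⟨hα0, hαπ⟩ := hα
  obtain ⟨hβ0, hβπ⟩ := hβ
  obtain ⟨hγ0, hγπ⟩ := hγ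
  have e1 : cos α + cos (β + γ) = 2 * cos ((α + (β + γ)) / 2) * cos ((α - (β + γ)) / 2) :=
    Real.cos_add_cos _ _
  have e2 : cos α + cos (β - γ) = 2 * cos ((α + (β - γ)) / 2) * cos ((α - (β - γ)) / 2) :=
    Real.cos_add_cos _ _
  have key : 1 - cos α ^ 2 - cos β ^ 2 - cos γ ^ 2 - 2 * cos α * cos β * cos γ
      = -((cos α + cos (β + γ)) * (cos α + cos (β - γ))) := by
    rw [cos_add, cos_sub]
    have hb := sin_sq_add_cos_sq β
    have hg := sin_sq_add_cos_sq γ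
    nlinarith [hb, hg, sq_nonneg (sin β * sin γ)]
  have c1 : cos ((α + (β + γ)) / 2) < 0 :=
    Real.cos_neg_of_pi_div_two_lt_of_lt (by linarith) (by linarith)
  have c2 : 0 < cos ((α - (β + γ)) / 2) :=
    Real.cos_pos_of_mem_Ioo ⟨by linarith, by linarith⟩
  have c3 : 0 < cos ((α + (β - γ)) / 2) :=
    Real.cos_pos_of_mem_Ioo ⟨by linarith, by linarith⟩
  have c4 : 0 < cos ((α - (β - γ)) / 2) :=
    Real.cos_pos_of_mem_Ioo ⟨by linarith, by linarith⟩
  rw [key, e1, e2]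
  nlinarith [mul_pos c2 (mul_pos c3 c4)]

lemma inner_shift_shift (x z z' : EuclideanSpace ℝ (Fin 3)) (c c' : ℝ) :
    (inner ℝ (z - c • x) (z' - c' • x) : ℝ)
      = inner ℝ z z' - c' * inner ℝ z x - c * inner ℝ x z' + c * c' * inner ℝ x x := by
  simp only [inner_sub_left, inner_sub_right, real_inner_smul_left, real_inner_smul_right]
  ring

lemma inner_left_shift (x z' : EuclideanSpace ℝ (Fin 3)) (c' : ℝ) :
    (inner ℝ x (z' - c' • x) : ℝ) = inner ℝ x z' - c' * inner ℝ x x := by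
  simp only [inner_sub_right, real_inner_smul_right]

/-- Lemma 4.2: in a three-circle configuration satisfying condition (c2), the three
boundary circles have no common point. -/
theorem boundary_circles_no_common_point (θ₁₂ θ₂₃ θ₃₁ r₁ r₂ r₃ : ℝ)
    (h₁₂ : θ₁₂ ∈ Set.Ioo 0 π) (h₂₃ : θ₂₃ ∈ Set.Ioo 0 π) (h₃₁ : θ₃₁ ∈ Set.Ioo 0 π)
    (hsum : θ₁₂ + θ₂₃ + θ₃₁ > π)
    (ha : θ₁₂ + θ₂₃ < θ₃₁ + π) (hb : θ₂₃ + θ₃₁ < θ₁₂ + π) (hc : θ₃₁ + θ₁₂ < θ₂₃ + π)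
    (hr₁ : r₁ ∈ Set.Ioo 0 π) (hr₂ : r₂ ∈ Set.Ioo 0 π) (hr₃ : r₃ ∈ Set.Ioo 0 π)
    (z₁ z₂ z₃ : EuclideanSpace ℝ (Fin 3))
    (hz₁ : ‖z₁‖ = 1) (hz₂ : ‖z₂‖ = 1) (hz₃ : ‖z₃‖ = 1)
    (hz₁₂ : (inner ℝ z₁ z₂ : ℝ) = cos r₁ * cos r₂ - cos θ₁₂ * sin r₁ * sin r₂)
    (hz₂₃ : (inner ℝ z₂ z₃ : ℝ) = cos r₂ * cos r₃ - cos θ₂₃ * sin r₂ * sin r₃)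
    (hz₃₁ : (inner ℝ z₃ z₁ : ℝ) = cos r₃ * cos r₁ - cos θ₃₁ * sin r₃ * sin r₁) :
    ¬ ∃ x : EuclideanSpace ℝ (Fin 3), ‖x‖ = 1 ∧
        (inner ℝ x z₁ : ℝ) = cos r₁ ∧ (inner ℝ x z₂ : ℝ) = cos r₂ ∧
        (inner ℝ x z₃ : ℝ) = cos r₃ := by
  rintro ⟨x, hx, hx1, hx2, hx3⟩
  have s1 : 0 < sin r₁ := Real.sin_pos_of_pos_of_lt_pi hr₁.1 hr₁.2
  have s2 : 0 < sin r₂ := Real.sin_pos_of_pos_of_lt_pi hr₂.1 hr₂.2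
  have s3 : 0 < sin r₃ := Real.sin_pos_of_pos_of_lt_pi hr₃.1 hr₃.2
  have hD : 0 < 1 - cos θ₁₂ ^ 2 - cos θ₂₃ ^ 2 - cos θ₃₁ ^ 2
      - 2 * cos θ₁₂ * cos θ₂₃ * cos θ₃₁ :=
    det_pos_aux θ₁₂ θ₂₃ θ₃₁ h₁₂ h₂₃ h₃₁ hsum (by linarith) (by linarith) (by linarith)
  have hxx : (inner ℝ x x : ℝ) = 1 := by
    rw [real_inner_self_eq_norm_sq, hx]; norm_num
  have hz₁₁ : (inner ℝ z₁ z₁ : ℝ) = 1 := by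
    rw [real_inner_self_eq_norm_sq, hz₁]; norm_num
  have hz₂₂ : (inner ℝ z₂ z₂ : ℝ) = 1 := by
    rw [real_inner_self_eq_norm_sq, hz₂]; norm_num
  have hz₃₃ : (inner ℝ z₃ z₃ : ℝ) = 1 := by
    rw [real_inner_self_eq_norm_sq, hz₃]; norm_num
  have hz₁x : (inner ℝ z₁ x : ℝ) = cos r₁ := by rw [real_inner_comm]; exact hx1
  have hz₂x : (inner ℝ z₂ x : ℝ) = cos r₂ := by rw [real_inner_comm]; exact hx2
  have hz₃x : (inner ℝ z₃ x : ℝ) = cos r₃ := by rw [real_inner_comm]; exact hx3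
  have hz₂₁ : (inner ℝ z₂ z₁ : ℝ) = cos r₁ * cos r₂ - cos θ₁₂ * sin r₁ * sin r₂ := by
    rw [real_inner_comm]; exact hz₁₂
  have hz₃₂ : (inner ℝ z₃ z₂ : ℝ) = cos r₂ * cos r₃ - cos θ₂₃ * sin r₂ * sin r₃ := by
    rw [real_inner_comm]; exact hz₂₃
  have hz₁₃ : (inner ℝ z₁ z₃ : ℝ) = cos r₃ * cos r₁ - cos θ₃₁ * sin r₃ * sin r₁ := by
    rw [real_inner_comm]; exact hz₃₁
  have hsc₁ := sin_sq_add_cos_sq r₁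
  have hsc₂ := sin_sq_add_cos_sq r₂
  have hsc₃ := sin_sq_add_cos_sq r₃
  set w₁ : EuclideanSpace ℝ (Fin 3) := z₁ - cos r₁ • x with hw₁
  set w₂ : EuclideanSpace ℝ (Fin 3) := z₂ - cos r₂ • x with hw₂
  set w₃ : EuclideanSpace ℝ (Fin 3) := z₃ - cos r₃ • x with hw₃
  have hnli : ¬ LinearIndependent ℝ ![x, w₁, w₂, w₃] := by
    intro h
    have := h.fintype_card_le_finrank
    rw [finrank_euclideanSpace_fin] at this
    simp at this
  rw [Fintype.not_linearIndependent_iff] at hnli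
  obtain ⟨g, hg, i, hi⟩ := hnli
  have hrel : g 0 • x + g 1 • w₁ + g 2 • w₂ + g 3 • w₃ = 0 := by
    have := hg
    simpa [Fin.sum_univ_four, add_assoc] using this
  have inx : ∀ y : EuclideanSpace ℝ (Fin 3),
      g 0 * (inner ℝ x y : ℝ) + g 1 * inner ℝ w₁ y + g 2 * inner ℝ w₂ y + g 3 * inner ℝ w₃ y = 0 := by
    intro y
    have h' := congrArg (fun v : EuclideanSpace ℝ (Fin 3) => (inner ℝ v y : ℝ)) hrel
    simp only [inner_add_left, real_inner_smul_left, inner_zero_left] at h'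
    exact h'
  -- inner ℝ products among x, w₁, w₂, w₃
  have ixw₁ : (inner ℝ x w₁ : ℝ) = 0 := by
    rw [hw₁, inner_left_shift, hx1, hxx]; ring
  have ixw₂ : (inner ℝ x w₂ : ℝ) = 0 := by
    rw [hw₂, inner_left_shift, hx2, hxx]; ring
  have ixw₃ : (inner ℝ x w₃ : ℝ) = 0 := by
    rw [hw₃, inner_left_shift, hx3, hxx]; ring
  have iw₁x : (inner ℝ w₁ x : ℝ) = 0 := by rw [real_inner_comm]; exact ixw₁
  have iw₂x : (inner ℝ w₂ x : ℝ) = 0 := by rw [real_inner_comm]; exact ixw₂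
  have iw₃x : (inner ℝ w₃ x : ℝ) = 0 := by rw [real_inner_comm]; exact ixw₃
  have iw₁₁ : (inner ℝ w₁ w₁ : ℝ) = sin r₁ * sin r₁ := by
    rw [hw₁, inner_shift_shift, hz₁₁, hz₁x, hx1, hxx]; linear_combination -hsc₁
  have iw₂₂ : (inner ℝ w₂ w₂ : ℝ) = sin r₂ * sin r₂ := by
    rw [hw₂, inner_shift_shift, hz₂₂, hz₂x, hx2, hxx]; linear_combination -hsc₂
  have iw₃₃ : (inner ℝ w₃ w₃ : ℝ) = sin r₃ * sin r₃ := by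
    rw [hw₃, inner_shift_shift, hz₃₃, hz₃x, hx3, hxx]; linear_combination -hsc₃
  have iw₁₂ : (inner ℝ w₁ w₂ : ℝ) = -(cos θ₁₂ * sin r₁ * sin r₂) := by
    rw [hw₁, hw₂, inner_shift_shift, hz₁₂, hz₁x, hx2, hxx]; ring
  have iw₂₁ : (inner ℝ w₂ w₁ : ℝ) = -(cos θ₁₂ * sin r₁ * sin r₂) := by
    rw [real_inner_comm]; exact iw₁₂
  have iw₂₃ : (inner ℝ w₂ w₃ : ℝ) = -(cos θ₂₃ * sin r₂ * sin r₃) := by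
    rw [hw₂, hw₃, inner_shift_shift, hz₂₃, hz₂x, hx3, hxx]; ring
  have iw₃₂ : (inner ℝ w₃ w₂ : ℝ) = -(cos θ₂₃ * sin r₂ * sin r₃) := by
    rw [real_inner_comm]; exact iw₂₃
  have iw₃₁ : (inner ℝ w₃ w₁ : ℝ) = -(cos θ₃₁ * sin r₃ * sin r₁) := by
    rw [hw₃, hw₁, inner_shift_shift, hz₃₁, hz₃x, hx1, hxx]; ring
  have iw₁₃ : (inner ℝ w₁ w₃ : ℝ) = -(cos θ₃₁ * sin r₃ * sin r₁) := by
    rw [real_inner_comm]; exact iw₃₁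
  -- the four linear equations
  have E0 := inx x
  rw [hxx, iw₁x, iw₂x, iw₃x] at E0
  have hg0 : g 0 = 0 := by linarith
  have E1 := inx w₁
  rw [ixw₁, iw₁₁, iw₂₁, iw₃₁] at E1
  have E2 := inx w₂
  rw [ixw₂, iw₁₂, iw₂₂, iw₃₂] at E2
  have E3 := inx w₃
  rw [ixw₃, iw₁₃, iw₂₃, iw₃₃] at E3
  set a := cos θ₁₂ with hadef
  set b := cos θ₂₃ with hbdef
  set c := cos θ₃₁ with hcdef
  set u := g 1 * sin r₁ with hu
  set v := g 2 * sin r₂ with hv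
  set w := g 3 * sin r₃ with hw
  have F1' : sin r₁ * (u - a * v - c * w) = 0 := by
    rw [hu, hv, hw]; linear_combination E1
  have F2' : sin r₂ * (-(a * u) + v - b * w) = 0 := by
    rw [hu, hv, hw]; linear_combination E2
  have F3' : sin r₃ * (-(c * u) - b * v + w) = 0 := by
    rw [hu, hv, hw]; linear_combination E3
  have F1 : u - a * v - c * w = 0 := by
    rcases mul_eq_zero.mp F1' with h | h
    · exact absurd h s1.ne'
    · exact h
  have F2 : -(a * u) + v - b * w = 0 := by
    rcases mul_eq_zero.mp F2' with h | h
    · exact absurd h s2.ne'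
    · exact h
  have F3 : -(c * u) - b * v + w = 0 := by
    rcases mul_eq_zero.mp F3' with h | h
    · exact absurd h s3.ne'
    · exact h
  have hDne : (1 - a ^ 2 - b ^ 2 - c ^ 2 - 2 * a * b * c) ≠ 0 := ne_of_gt hD
  have hu0 : u = 0 := by
    have h' : u * (1 - a ^ 2 - b ^ 2 - c ^ 2 - 2 * a * b * c) = 0 := by
      linear_combination (1 - b ^ 2) * F1 + (a + b * c) * F2 + (c + a * b) * F3
    exact (mul_eq_zero.mp h').resolve_right hDne
  have hv0 : v = 0 := by
    have h' : v * (1 - a ^ 2 - b ^ 2 - c ^ 2 - 2 * a * b * c) = 0 := by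
      linear_combination (a + b * c) * F1 + (1 - c ^ 2) * F2 + (b + a * c) * F3
    exact (mul_eq_zero.mp h').resolve_right hDne
  have hw0 : w = 0 := by
    have h' : w * (1 - a ^ 2 - b ^ 2 - c ^ 2 - 2 * a * b * c) = 0 := by
      linear_combination (c + a * b) * F1 + (b + a * c) * F2 + (1 - a ^ 2) * F3
    exact (mul_eq_zero.mp h').resolve_right hDne
  have hg1 : g 1 = 0 := by
    have := hu0; rw [hu] at this
    exact (mul_eq_zero.mp this).resolve_right s1.ne'
  have hg2 : g 2 = 0 := by
    have := hv0; rw [hv] at this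
    exact (mul_eq_zero.mp this).resolve_right s2.ne'
  have hg3 : g 3 = 0 := by
    have := hw0; rw [hw] at this
    exact (mul_eq_zero.mp this).resolve_right s3.ne'
  fin_cases i <;> simp_all
end

section
/- Let D₁ = D(c₁,r₁), D₂ = D(c₂,r₂), D₃ = D(c₃,r₃) be three pairwise intersecting spherical caps on the unit sphere S² with radii r₁, r₂, r₃ ∈ (0, π/2], and suppose there exist overlap angles θ₁₂, θ₂₃, θ₃₁ ∈ [0,π), i.e. cos θ_μν = (cos r_μ cos r_ν − ⟪c_μ,c_ν⟫)/(sin r_μ sin r_ν) for each pair. If θ₁₂ + θ₂₃ + θ₃₁ < π, then D₁ ∩ D₂ ∩ D₃ = ∅. -/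
open Real

set_option maxHeartbeats 1000000

section Aux

variable {V : Type*} [NormedAddCommGroup V] [InnerProductSpace ℝ V]

local notation "⟪" x ", " y "⟫" => @inner ℝ V _ x y

/-- Triangle inequality for the unoriented angle between unit vectors. -/
lemma angle_triangle_unit (u v w : V) (hu : ‖u‖ = 1) (hv : ‖v‖ = 1) (hw : ‖w‖ = 1) :
    InnerProductGeometry.angle u w ≤
      InnerProductGeometry.angle u v + InnerProductGeometry.angle v w := by
  set a := InnerProductGeometry.angle u v with ha
  set b := InnerProductGeometry.angle v w with hb
  set c := InnerProductGeometry.angle u w with hc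
  by_cases hab : π < a + b
  · have := InnerProductGeometry.angle_le_pi u w
    linarith
  push_neg at hab
  have ha0 : 0 ≤ a := InnerProductGeometry.angle_nonneg u v
  have hb0 : 0 ≤ b := InnerProductGeometry.angle_nonneg v w
  have hc0 : 0 ≤ c := InnerProductGeometry.angle_nonneg u w
  have hcpi : c ≤ π := InnerProductGeometry.angle_le_pi u w
  set p : ℝ := ⟪u, v⟫ with hp
  set q : ℝ := ⟪v, w⟫ with hq
  set s : ℝ := ⟪u, w⟫ with hs
  have hvu : ⟪v, u⟫ = p := by rw [real_inner_comm]
  have hwv : ⟪w, v⟫ = q := by rw [real_inner_comm]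
  have hwu : ⟪w, u⟫ = s := by rw [real_inner_comm]
  have huu : ⟪u, u⟫ = 1 := by
    rw [real_inner_self_eq_norm_sq, hu]; norm_num
  have hvv : ⟪v, v⟫ = 1 := by
    rw [real_inner_self_eq_norm_sq, hv]; norm_num
  have hww : ⟪w, w⟫ = 1 := by
    rw [real_inner_self_eq_norm_sq, hw]; norm_num
  have hcos_a : Real.cos a = p := by
    have := InnerProductGeometry.cos_angle_mul_norm_mul_norm u v
    rw [hu, hv] at this; simpa using this
  have hcos_b : Real.cos b = q := by
    have := InnerProductGeometry.cos_angle_mul_norm_mul_norm v w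
    rw [hv, hw] at this; simpa using this
  have hcos_c : Real.cos c = s := by
    have := InnerProductGeometry.cos_angle_mul_norm_mul_norm u w
    rw [hu, hw] at this; simpa using this
  have hsin_a : Real.sin a = Real.sqrt (1 - p * p) := by
    have := InnerProductGeometry.sin_angle_mul_norm_mul_norm u v
    rw [hu, hv, huu, hvv] at this; simpa using this
  have hsin_b : Real.sin b = Real.sqrt (1 - q * q) := by
    have := InnerProductGeometry.sin_angle_mul_norm_mul_norm v w
    rw [hv, hw, hvv, hww] at this; simpa using this
  -- Cauchy–Schwarz for the projections orthogonal to v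
  have hCS : (s - p * q) * (s - p * q) ≤ (1 - p * p) * (1 - q * q) := by
    have h := real_inner_mul_inner_self_le (u - p • v) (w - q • v)
    have h1 : ⟪u - p • v, w - q • v⟫ = s - p * q := by
      simp only [inner_sub_left, inner_sub_right, real_inner_smul_left, real_inner_smul_right,
        hvv, hvu, hwv, hwu, ← hp, ← hq, ← hs]
      ring
    have h2 : ⟪u - p • v, u - p • v⟫ = 1 - p * p := by
      simp only [inner_sub_left, inner_sub_right, real_inner_smul_left, real_inner_smul_right,
        hvv, huu, hvu, ← hp]
      ring
    have h3 : ⟪w - q • v, w - q • v⟫ = 1 - q * q := by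
      simp only [inner_sub_left, inner_sub_right, real_inner_smul_left, real_inner_smul_right,
        hvv, hww, hwv, ← hq]
      ring
    rw [h1, h2, h3] at h
    exact h
  have hp1 : |p| ≤ 1 := by
    have := abs_real_inner_le_norm u v
    rw [hu, hv] at this; simpa using this
  have hq1 : |q| ≤ 1 := by
    have := abs_real_inner_le_norm v w
    rw [hv, hw] at this; simpa using this
  have hp2 : 0 ≤ 1 - p * p := by nlinarith [abs_nonneg p, sq_abs p]
  have hq2 : 0 ≤ 1 - q * q := by nlinarith [abs_nonneg q, sq_abs q]
  -- cos (a + b) ≤ cos c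
  have hkey : Real.cos (a + b) ≤ Real.cos c := by
    rw [Real.cos_add, hcos_a, hcos_b, hcos_c, hsin_a, hsin_b]
    have h4 : Real.sqrt (1 - p * p) * Real.sqrt (1 - q * q)
        = Real.sqrt ((1 - p * p) * (1 - q * q)) := (Real.sqrt_mul hp2 _).symm
    have h5 : Real.sqrt ((s - p * q) * (s - p * q)) ≤
        Real.sqrt ((1 - p * p) * (1 - q * q)) := Real.sqrt_le_sqrt hCS
    have h6 : Real.sqrt ((s - p * q) * (s - p * q)) = |s - p * q| :=
      Real.sqrt_mul_self_eq_abs _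
    have h7 : p * q - s ≤ |s - p * q| := by
      rw [abs_sub_comm]; exact le_abs_self _
    rw [h4]
    linarith
  -- conclude by anti-monotonicity of cos on [0, π]
  by_contra hlt
  push_neg at hlt
  have h8 : Real.cos c < Real.cos (a + b) :=
    Real.strictAntiOn_cos ⟨by linarith, hab⟩ ⟨hc0, hcpi⟩ hlt
  linarith

/-- Inner product of the two auxiliary unit vectors built from caps. -/
lemma inner_w_eq (x c c' : V) (t t' σ σ' A A' : ℝ) (ht : t ≠ 0) (ht' : t' ≠ 0)
    (hxx : ⟪x, x⟫ = 1) (hA : ⟪x, c⟫ = A) (hA' : ⟪x, c'⟫ = A') :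
    ⟪t⁻¹ • ((σ - A) • x + c), t'⁻¹ • ((σ' - A') • x + c')⟫
      = (σ * σ' - A * A' + ⟪c, c'⟫) / (t * t') := by
  have hcx : ⟪c, x⟫ = A := by rw [real_inner_comm]; exact hA
  simp only [real_inner_smul_left, real_inner_smul_right, inner_add_left, inner_add_right,
    hxx, hA, hA', hcx]
  field_simp
  ring

lemma norm_w_eq_one (x c : V) (t σ A R : ℝ) (ht : 0 < t) (hpyth : t ^ 2 = 1 - R ^ 2)
    (hσsq : σ ^ 2 = A ^ 2 - R ^ 2) (hx : ‖x‖ = 1) (hc : ‖c‖ = 1) (hA : ⟪x, c⟫ = A) :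
    ‖t⁻¹ • ((σ - A) • x + c)‖ = 1 := by
  have hxx : ⟪x, x⟫ = 1 := by rw [real_inner_self_eq_norm_sq, hx]; norm_num
  have hcc : ⟪c, c⟫ = 1 := by rw [real_inner_self_eq_norm_sq, hc]; norm_num
  have h := inner_w_eq x c c t t σ σ A A (ne_of_gt ht) (ne_of_gt ht) hxx hA hA
  rw [hcc] at h
  have hval : σ * σ - A * A + 1 = t * t := by nlinarith [hσsq, hpyth]
  rw [hval, div_self (by positivity)] at h
  have h2 : ‖t⁻¹ • ((σ - A) • x + c)‖ ^ 2 = 1 := by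
    rw [← real_inner_self_eq_norm_sq]; exact h
  nlinarith [norm_nonneg (t⁻¹ • ((σ - A) • x + c))]

lemma key_sqrt_ineq (A R A' R' : ℝ) (h1 : 0 ≤ R) (h2 : R ≤ A) (h3 : 0 ≤ R') (h4 : R' ≤ A') :
    Real.sqrt (A ^ 2 - R ^ 2) * Real.sqrt (A' ^ 2 - R' ^ 2) ≤ A * A' - R * R' := by
  have h5 : 0 ≤ A ^ 2 - R ^ 2 := by nlinarith
  have h6 : Real.sqrt (A ^ 2 - R ^ 2) * Real.sqrt (A' ^ 2 - R' ^ 2)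
      = Real.sqrt ((A ^ 2 - R ^ 2) * (A' ^ 2 - R' ^ 2)) := (Real.sqrt_mul h5 _).symm
  have h7 : (A ^ 2 - R ^ 2) * (A' ^ 2 - R' ^ 2) ≤ (A * A' - R * R') ^ 2 := by nlinarith [sq_nonneg (A * R' - A' * R)]
  have h8 : Real.sqrt ((A ^ 2 - R ^ 2) * (A' ^ 2 - R' ^ 2)) ≤
      Real.sqrt ((A * A' - R * R') ^ 2) := Real.sqrt_le_sqrt h7
  have h9 : Real.sqrt ((A * A' - R * R') ^ 2) = A * A' - R * R' :=
    Real.sqrt_sq (by nlinarith)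
  rw [h6]
  linarith

/-- The overlap angle dominates `π` minus the angle between the auxiliary vectors. -/
lemma pi_sub_angle_le_theta (x c c' : V) (t t' A A' R R' θ : ℝ)
    (ht : 0 < t) (ht' : 0 < t')
    (hpyth : t ^ 2 = 1 - R ^ 2) (hpyth' : t' ^ 2 = 1 - R' ^ 2)
    (hR : 0 ≤ R) (hRA : R ≤ A) (hR' : 0 ≤ R') (hRA' : R' ≤ A')
    (hx : ‖x‖ = 1) (hc : ‖c‖ = 1) (hc' : ‖c'‖ = 1)
    (hA : ⟪x, c⟫ = A) (hA' : ⟪x, c'⟫ = A')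
    (hθ : θ ∈ Set.Ico 0 π)
    (hcosθ : Real.cos θ = (R * R' - ⟪c, c'⟫) / (t * t')) :
    π - InnerProductGeometry.angle
        (t⁻¹ • ((Real.sqrt (A ^ 2 - R ^ 2) - A) • x + c))
        (t'⁻¹ • ((Real.sqrt (A' ^ 2 - R' ^ 2) - A') • x + c')) ≤ θ := by
  have hxx : ⟪x, x⟫ = 1 := by rw [real_inner_self_eq_norm_sq, hx]; norm_num
  set σ : ℝ := Real.sqrt (A ^ 2 - R ^ 2) with hσdef
  set σ' : ℝ := Real.sqrt (A' ^ 2 - R' ^ 2) with hσdef'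
  have hσsq : σ ^ 2 = A ^ 2 - R ^ 2 := Real.sq_sqrt (by nlinarith)
  have hσsq' : σ' ^ 2 = A' ^ 2 - R' ^ 2 := Real.sq_sqrt (by nlinarith)
  set u := t⁻¹ • ((σ - A) • x + c) with hudef
  set u' := t'⁻¹ • ((σ' - A') • x + c') with hudef'
  have hn : ‖u‖ = 1 := norm_w_eq_one x c t σ A R ht hpyth hσsq hx hc hA
  have hn' : ‖u'‖ = 1 := norm_w_eq_one x c' t' σ' A' R' ht' hpyth' hσsq' hx hc' hA'
  set g : ℝ := InnerProductGeometry.angle u u' with hgdef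
  have hg0 : 0 ≤ g := InnerProductGeometry.angle_nonneg u u'
  have hgpi : g ≤ π := InnerProductGeometry.angle_le_pi u u'
  have hcosg : Real.cos g = ⟪u, u'⟫ := by
    have := InnerProductGeometry.cos_angle_mul_norm_mul_norm u u'
    rw [hn, hn'] at this; simpa using this
  have hiuu : ⟪u, u'⟫ = (σ * σ' - A * A' + ⟪c, c'⟫) / (t * t') :=
    inner_w_eq x c c' t t' σ σ' A A' (ne_of_gt ht) (ne_of_gt ht') hxx hA hA'
  have hkey : σ * σ' ≤ A * A' - R * R' := key_sqrt_ineq A R A' R' hR hRA hR' hRA'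
  have hle : ⟪u, u'⟫ ≤ (⟪c, c'⟫ - R * R') / (t * t') := by
    rw [hiuu]
    exact (div_le_div_iff_of_pos_right (by positivity)).mpr (by linarith)
  have hcmp : Real.cos θ ≤ Real.cos (π - g) := by
    rw [Real.cos_pi_sub, hcosg, hcosθ]
    have h10 : (R * R' - ⟪c, c'⟫) / (t * t') = -((⟪c, c'⟫ - R * R') / (t * t')) := by
      ring
    rw [h10]
    linarith
  by_contra hlt
  push_neg at hlt
  have h8 : Real.cos (π - g) < Real.cos θ :=
    Real.strictAntiOn_cos ⟨hθ.1, hθ.2.le⟩ ⟨by linarith, by linarith⟩ hlt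
  linarith

end Aux

/-- Lemma 4.3: three pairwise intersecting spherical caps of radii at most `π/2` whose
overlap angles have sum less than `π` have empty common intersection. -/
theorem caps_empty_triple_intersection (c₁ c₂ c₃ : EuclideanSpace ℝ (Fin 3))
    (hc₁ : ‖c₁‖ = 1) (hc₂ : ‖c₂‖ = 1) (hc₃ : ‖c₃‖ = 1)
    (r₁ r₂ r₃ : ℝ)
    (hr₁ : r₁ ∈ Set.Ioc 0 (π / 2)) (hr₂ : r₂ ∈ Set.Ioc 0 (π / 2))
    (hr₃ : r₃ ∈ Set.Ioc 0 (π / 2))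
    (D₁ D₂ D₃ : Set (EuclideanSpace ℝ (Fin 3)))
    (hD₁ : D₁ = {x | ‖x‖ = 1 ∧ cos r₁ ≤ (inner ℝ x c₁ : ℝ)})
    (hD₂ : D₂ = {x | ‖x‖ = 1 ∧ cos r₂ ≤ (inner ℝ x c₂ : ℝ)})
    (hD₃ : D₃ = {x | ‖x‖ = 1 ∧ cos r₃ ≤ (inner ℝ x c₃ : ℝ)})
    (h₁₂ : (D₁ ∩ D₂).Nonempty) (h₂₃ : (D₂ ∩ D₃).Nonempty) (h₃₁ : (D₃ ∩ D₁).Nonempty)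
    (θ₁₂ θ₂₃ θ₃₁ : ℝ)
    (hθ₁₂ : θ₁₂ ∈ Set.Ico 0 π) (hθ₂₃ : θ₂₃ ∈ Set.Ico 0 π) (hθ₃₁ : θ₃₁ ∈ Set.Ico 0 π)
    (hcos₁₂ : cos θ₁₂ = (cos r₁ * cos r₂ - (inner ℝ c₁ c₂ : ℝ)) / (sin r₁ * sin r₂))
    (hcos₂₃ : cos θ₂₃ = (cos r₂ * cos r₃ - (inner ℝ c₂ c₃ : ℝ)) / (sin r₂ * sin r₃))
    (hcos₃₁ : cos θ₃₁ = (cos r₃ * cos r₁ - (inner ℝ c₃ c₁ : ℝ)) / (sin r₃ * sin r₁))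
    (hsum : θ₁₂ + θ₂₃ + θ₃₁ < π) :
    D₁ ∩ D₂ ∩ D₃ = ∅ := by
  rw [Set.eq_empty_iff_forall_notMem]
  intro x hx
  rw [hD₁, hD₂, hD₃] at hx
  obtain ⟨⟨⟨hx1, hA1⟩, -, hA2⟩, -, hA3⟩ := hx
  have hpi := Real.pi_pos
  have ht1 : 0 < Real.sin r₁ := Real.sin_pos_of_pos_of_lt_pi hr₁.1 (by linarith [hr₁.2])
  have ht2 : 0 < Real.sin r₂ := Real.sin_pos_of_pos_of_lt_pi hr₂.1 (by linarith [hr₂.2])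
  have ht3 : 0 < Real.sin r₃ := Real.sin_pos_of_pos_of_lt_pi hr₃.1 (by linarith [hr₃.2])
  have hR1 : 0 ≤ Real.cos r₁ := Real.cos_nonneg_of_mem_Icc ⟨by linarith [hr₁.1], hr₁.2⟩
  have hR2 : 0 ≤ Real.cos r₂ := Real.cos_nonneg_of_mem_Icc ⟨by linarith [hr₂.1], hr₂.2⟩
  have hR3 : 0 ≤ Real.cos r₃ := Real.cos_nonneg_of_mem_Icc ⟨by linarith [hr₃.1], hr₃.2⟩
  have hpyth1 : Real.sin r₁ ^ 2 = 1 - Real.cos r₁ ^ 2 := by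
    have := Real.sin_sq_add_cos_sq r₁; linarith
  have hpyth2 : Real.sin r₂ ^ 2 = 1 - Real.cos r₂ ^ 2 := by
    have := Real.sin_sq_add_cos_sq r₂; linarith
  have hpyth3 : Real.sin r₃ ^ 2 = 1 - Real.cos r₃ ^ 2 := by
    have := Real.sin_sq_add_cos_sq r₃; linarith
  set w1 : EuclideanSpace ℝ (Fin 3) := (Real.sin r₁)⁻¹ •
    ((Real.sqrt ((inner ℝ x c₁ : ℝ) ^ 2 - Real.cos r₁ ^ 2) - (inner ℝ x c₁ : ℝ)) • x + c₁) with hw1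
  set w2 : EuclideanSpace ℝ (Fin 3) := (Real.sin r₂)⁻¹ •
    ((Real.sqrt ((inner ℝ x c₂ : ℝ) ^ 2 - Real.cos r₂ ^ 2) - (inner ℝ x c₂ : ℝ)) • x + c₂) with hw2
  set w3 : EuclideanSpace ℝ (Fin 3) := (Real.sin r₃)⁻¹ •
    ((Real.sqrt ((inner ℝ x c₃ : ℝ) ^ 2 - Real.cos r₃ ^ 2) - (inner ℝ x c₃ : ℝ)) • x + c₃) with hw3
  have hσ1 : Real.sqrt ((inner ℝ x c₁ : ℝ) ^ 2 - Real.cos r₁ ^ 2) ^ 2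
      = (inner ℝ x c₁ : ℝ) ^ 2 - Real.cos r₁ ^ 2 :=
    Real.sq_sqrt (by nlinarith [hA1, hR1])
  have hσ2 : Real.sqrt ((inner ℝ x c₂ : ℝ) ^ 2 - Real.cos r₂ ^ 2) ^ 2
      = (inner ℝ x c₂ : ℝ) ^ 2 - Real.cos r₂ ^ 2 :=
    Real.sq_sqrt (by nlinarith [hA2, hR2])
  have hσ3 : Real.sqrt ((inner ℝ x c₃ : ℝ) ^ 2 - Real.cos r₃ ^ 2) ^ 2
      = (inner ℝ x c₃ : ℝ) ^ 2 - Real.cos r₃ ^ 2 :=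
    Real.sq_sqrt (by nlinarith [hA3, hR3])
  have hnw1 : ‖w1‖ = 1 :=
    norm_w_eq_one x c₁ (Real.sin r₁) _ (inner ℝ x c₁ : ℝ) (Real.cos r₁) ht1 hpyth1 hσ1 hx1 hc₁ rfl
  have hnw2 : ‖w2‖ = 1 :=
    norm_w_eq_one x c₂ (Real.sin r₂) _ (inner ℝ x c₂ : ℝ) (Real.cos r₂) ht2 hpyth2 hσ2 hx1 hc₂ rfl
  have hnw3 : ‖w3‖ = 1 :=
    norm_w_eq_one x c₃ (Real.sin r₃) _ (inner ℝ x c₃ : ℝ) (Real.cos r₃) ht3 hpyth3 hσ3 hx1 hc₃ rfl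
  have hb12 : π - InnerProductGeometry.angle w1 w2 ≤ θ₁₂ :=
    pi_sub_angle_le_theta x c₁ c₂ (Real.sin r₁) (Real.sin r₂) (inner ℝ x c₁ : ℝ) (inner ℝ x c₂ : ℝ)
      (Real.cos r₁) (Real.cos r₂) θ₁₂ ht1 ht2 hpyth1 hpyth2 hR1 hA1 hR2 hA2 hx1 hc₁ hc₂
      rfl rfl hθ₁₂ hcos₁₂
  have hb23 : π - InnerProductGeometry.angle w2 w3 ≤ θ₂₃ :=
    pi_sub_angle_le_theta x c₂ c₃ (Real.sin r₂) (Real.sin r₃) (inner ℝ x c₂ : ℝ) (inner ℝ x c₃ : ℝ)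
      (Real.cos r₂) (Real.cos r₃) θ₂₃ ht2 ht3 hpyth2 hpyth3 hR2 hA2 hR3 hA3 hx1 hc₂ hc₃
      rfl rfl hθ₂₃ hcos₂₃
  have hb31 : π - InnerProductGeometry.angle w3 w1 ≤ θ₃₁ :=
    pi_sub_angle_le_theta x c₃ c₁ (Real.sin r₃) (Real.sin r₁) (inner ℝ x c₃ : ℝ) (inner ℝ x c₁ : ℝ)
      (Real.cos r₃) (Real.cos r₁) θ₃₁ ht3 ht1 hpyth3 hpyth1 hR3 hA3 hR1 hA1 hx1 hc₃ hc₁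
      rfl rfl hθ₃₁ hcos₃₁
  have htri : InnerProductGeometry.angle w3 w1 ≤
      (π - InnerProductGeometry.angle w2 w3) + (π - InnerProductGeometry.angle w1 w2) := by
    have h := angle_triangle_unit w3 (-w2) w1 hnw3 (by rw [norm_neg]; exact hnw2) hnw1
    rw [InnerProductGeometry.angle_neg_right, InnerProductGeometry.angle_neg_left,
      InnerProductGeometry.angle_comm w3 w2, InnerProductGeometry.angle_comm w2 w1] at h
    linarith
  linarith
end

section
/- Let D₁ = D(c₁,r₁), D₂ = D(c₂,r₂), D₃ = D(c₃,r₃) be three pairwise intersecting spherical caps on the unit sphere S² with radii r₁, r₂, r₃ ∈ (0,π), and suppose there exist overlap angles θ₁₂, θ₂₃, θ₃₁ ∈ [0,π), i.e. cos θ_μν = (cos r_μ cos r_ν − ⟪c_μ,c_ν⟫)/(sin r_μ sin r_ν) for each pair. Assume the union of the three open caps {x ∈ S² : ⟪x,c_μ⟫ > cos r_μ} (μ = 1,2,3) is a proper subset of S². If θ₁₂ + θ₂₃ + θ₃₁ < π, then D₁ ∩ D₂ ∩ D₃ = ∅. -/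
open Real

section Aux

variable {V : Type*} [NormedAddCommGroup V] [InnerProductSpace ℝ V]

local notation "⟪" x ", " y "⟫" => @inner ℝ _ _ x y

lemma my_arccos_le_arccos {x y : ℝ} (h : x ≤ y) : arccos y ≤ arccos x := by
  rw [Real.arccos_eq_pi_div_two_sub_arcsin, Real.arccos_eq_pi_div_two_sub_arcsin]
  have := Real.monotone_arcsin h
  linarith

lemma my_arccos_triangle (a b c : V) (ha : ‖a‖ = 1) (hb : ‖b‖ = 1) (hc : ‖c‖ = 1) :
    arccos ⟪a, c⟫ ≤ arccos ⟪a, b⟫ + arccos ⟪b, c⟫ := by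
  have hp : |(⟪a, b⟫ : ℝ)| ≤ 1 := by simpa [ha, hb] using abs_real_inner_le_norm a b
  have hq : |(⟪b, c⟫ : ℝ)| ≤ 1 := by simpa [hb, hc] using abs_real_inner_le_norm b c
  rw [abs_le] at hp hq
  by_cases hbig : π ≤ arccos ⟪a, b⟫ + arccos ⟪b, c⟫
  · exact le_trans (Real.arccos_le_pi _) hbig
  push_neg at hbig
  have hbb : (⟪b, b⟫ : ℝ) = 1 := by
    rw [real_inner_self_eq_norm_sq, hb]; norm_num
  have h1 : (⟪a - ⟪a, b⟫ • b, c - ⟪b, c⟫ • b⟫ : ℝ) = ⟪a, c⟫ - ⟪a, b⟫ * ⟪b, c⟫ := by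
    simp only [inner_sub_left, inner_sub_right, real_inner_smul_left, real_inner_smul_right, hbb]
    ring
  have h2 : ‖a - ⟪a, b⟫ • b‖ ^ 2 = 1 - ⟪a, b⟫ ^ 2 := by
    rw [norm_sub_sq_real, real_inner_smul_right, norm_smul, ha]
    simp [norm_eq_abs, mul_pow, sq_abs, hb]
    ring
  have h3 : ‖c - ⟪b, c⟫ • b‖ ^ 2 = 1 - ⟪b, c⟫ ^ 2 := by
    rw [norm_sub_sq_real, real_inner_smul_right, norm_smul, hc]
    simp [norm_eq_abs, mul_pow, sq_abs, hb]
    rw [real_inner_comm c b]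
    ring
  have h4 : -(‖a - ⟪a, b⟫ • b‖ * ‖c - ⟪b, c⟫ • b‖) ≤ (⟪a - ⟪a, b⟫ • b, c - ⟪b, c⟫ • b⟫ : ℝ) :=
    (abs_le.1 (abs_real_inner_le_norm (a - ⟪a, b⟫ • b) (c - ⟪b, c⟫ • b))).1
  have hna : √(1 - ⟪a, b⟫ ^ 2) = ‖a - ⟪a, b⟫ • b‖ := by
    rw [← h2, Real.sqrt_sq (norm_nonneg _)]
  have hnc : √(1 - ⟪b, c⟫ ^ 2) = ‖c - ⟪b, c⟫ • b‖ := by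
    rw [← h3, Real.sqrt_sq (norm_nonneg _)]
  have key : cos (arccos ⟪a, b⟫ + arccos ⟪b, c⟫) ≤ ⟪a, c⟫ := by
    rw [Real.cos_add, Real.cos_arccos hp.1 hp.2, Real.cos_arccos hq.1 hq.2,
      Real.sin_arccos, Real.sin_arccos, hna, hnc]
    nlinarith [h4, h1]
  calc arccos ⟪a, c⟫ ≤ arccos (cos (arccos ⟪a, b⟫ + arccos ⟪b, c⟫)) := my_arccos_le_arccos key
    _ = arccos ⟪a, b⟫ + arccos ⟪b, c⟫ :=
      Real.arccos_cos (add_nonneg (Real.arccos_nonneg _) (Real.arccos_nonneg _)) hbig.le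

/-- Core angle lemma: three unit vectors with inner products at most `-cos θᵢⱼ` force
`θ₁₂ + θ₂₃ + θ₃₁ ≥ π`. -/
lemma core_angle_lemma (u₁ u₂ u₃ : V) (h1 : ‖u₁‖ = 1) (h2 : ‖u₂‖ = 1) (h3 : ‖u₃‖ = 1)
    (θ₁₂ θ₂₃ θ₃₁ : ℝ)
    (hθ₁₂ : θ₁₂ ∈ Set.Ico 0 π) (hθ₂₃ : θ₂₃ ∈ Set.Ico 0 π) (hθ₃₁ : θ₃₁ ∈ Set.Ico 0 π)
    (h12 : (⟪u₁, u₂⟫ : ℝ) ≤ -cos θ₁₂) (h23 : (⟪u₂, u₃⟫ : ℝ) ≤ -cos θ₂₃)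
    (h31 : (⟪u₃, u₁⟫ : ℝ) ≤ -cos θ₃₁) :
    π ≤ θ₁₂ + θ₂₃ + θ₃₁ := by
  have hn1 : ‖-u₁‖ = 1 := by rwa [norm_neg]
  have hn3 : ‖-u₃‖ = 1 := by rwa [norm_neg]
  have tri := my_arccos_triangle (-u₁) u₂ (-u₃) hn1 h2 hn3
  have e1 : (⟪-u₁, u₂⟫ : ℝ) = -⟪u₁, u₂⟫ := inner_neg_left _ _
  have e2 : (⟪u₂, -u₃⟫ : ℝ) = -⟪u₂, u₃⟫ := inner_neg_right _ _
  have e3 : (⟪-u₁, -u₃⟫ : ℝ) = ⟪u₃, u₁⟫ := by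
    rw [inner_neg_neg]; exact real_inner_comm _ _
  have b1 : arccos ⟪-u₁, u₂⟫ ≤ θ₁₂ := by
    have : cos θ₁₂ ≤ (⟪-u₁, u₂⟫ : ℝ) := by rw [e1]; linarith
    calc arccos ⟪-u₁, u₂⟫ ≤ arccos (cos θ₁₂) := my_arccos_le_arccos this
      _ = θ₁₂ := Real.arccos_cos hθ₁₂.1 hθ₁₂.2.le
  have b2 : arccos ⟪u₂, -u₃⟫ ≤ θ₂₃ := by
    have : cos θ₂₃ ≤ (⟪u₂, -u₃⟫ : ℝ) := by rw [e2]; linarith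
    calc arccos ⟪u₂, -u₃⟫ ≤ arccos (cos θ₂₃) := my_arccos_le_arccos this
      _ = θ₂₃ := Real.arccos_cos hθ₂₃.1 hθ₂₃.2.le
  have b3 : π - θ₃₁ ≤ arccos ⟪-u₁, -u₃⟫ := by
    have hle : (⟪-u₁, -u₃⟫ : ℝ) ≤ cos (π - θ₃₁) := by
      rw [e3, Real.cos_pi_sub]; linarith
    calc π - θ₃₁ = arccos (cos (π - θ₃₁)) :=
          (Real.arccos_cos (by linarith [hθ₃₁.2]) (by linarith [hθ₃₁.1])).symm
      _ ≤ arccos ⟪-u₁, -u₃⟫ := my_arccos_le_arccos hle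
  linarith


/-- Auxiliary vector in `V` used to build the unit vectors associated with caps. -/
noncomputable def wvec (x y c : V) (C s : ℝ) : V :=
  s⁻¹ • c - ((C - ⟪y, c⟫) / ((1 - ⟪x, y⟫) * s)) • x
    + ((⟪x, c⟫ - C) / ((1 - ⟪x, y⟫) * s)) • y

/-- The unit vector in `WithLp 2 (V × ℝ)` associated with a cap. -/
noncomputable def capVec (x y c : V) (C s : ℝ) : WithLp 2 (V × ℝ) :=
  (WithLp.equiv 2 (V × ℝ)).symm
    (wvec x y c C s - (⟪wvec x y c C s, x⟫ : ℝ) • x,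
     Real.sqrt (2 * ((C - ⟪y, c⟫) / ((1 - ⟪x, y⟫) * s))
        * ((⟪x, c⟫ - C) / ((1 - ⟪x, y⟫) * s)) * (1 - ⟪x, y⟫)))

lemma inner_perp_part (w w' x : V) (hx : (⟪x, x⟫ : ℝ) = 1) :
    (⟪w - (⟪w, x⟫ : ℝ) • x, w' - (⟪w', x⟫ : ℝ) • x⟫ : ℝ) = ⟪w, w'⟫ - ⟪w, x⟫ * ⟪w', x⟫ := by
  simp only [inner_sub_left, inner_sub_right, real_inner_smul_left, real_inner_smul_right, hx]
  rw [real_inner_comm x w']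
  ring

set_option maxHeartbeats 2000000 in
private 
lemma scal_ident (G P Q P' Q' τ C C' s s' : ℝ) (hs : s ≠ 0) (hs' : s' ≠ 0) (ht : 1 - τ ≠ 0) :
    s⁻¹ * s'⁻¹ * G - s⁻¹ * ((C' - Q') / ((1 - τ) * s')) * P +
        s⁻¹ * ((P' - C') / ((1 - τ) * s')) * Q -
      (C - Q) / ((1 - τ) * s) * s'⁻¹ * P' +
      (C - Q) / ((1 - τ) * s) * ((C' - Q') / ((1 - τ) * s')) * 1 -
      (C - Q) / ((1 - τ) * s) * ((P' - C') / ((1 - τ) * s')) * τ +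
      (P - C) / ((1 - τ) * s) * s'⁻¹ * Q' -
      (P - C) / ((1 - τ) * s) * ((C' - Q') / ((1 - τ) * s')) * τ +
      (P - C) / ((1 - τ) * s) * ((P' - C') / ((1 - τ) * s')) * 1 -
      (s⁻¹ * P - (C - Q) / ((1 - τ) * s) * 1 + (P - C) / ((1 - τ) * s) * τ) *
        (s'⁻¹ * P' - (C' - Q') / ((1 - τ) * s') * 1 + (P' - C') / ((1 - τ) * s') * τ) =
    (G - C * C') / (s * s') -
      ((C - Q) / ((1 - τ) * s) * ((P' - C') / ((1 - τ) * s')) +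
          (C' - Q') / ((1 - τ) * s') * ((P - C) / ((1 - τ) * s))) * (1 - τ) := by
  field_simp
  ring

lemma inner_comb (x y c c' : V) (α β γ α' β' γ' : ℝ) :
    (⟪γ • c - α • x + β • y, γ' • c' - α' • x + β' • y⟫ : ℝ)
      = γ*γ'*⟪c,c'⟫ - γ*α'*⟪c,x⟫ + γ*β'*⟪c,y⟫
        - α*γ'*⟪x,c'⟫ + α*α'*⟪x,x⟫ - α*β'*⟪x,y⟫
        + β*γ'*⟪y,c'⟫ - β*α'*⟪y,x⟫ + β*β'*⟪y,y⟫ := by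
  simp only [inner_add_left, inner_add_right, inner_sub_left, inner_sub_right,
    real_inner_smul_left, real_inner_smul_right]
  ring

lemma inner_comb_x (x y c : V) (α β γ : ℝ) :
    (⟪γ • c - α • x + β • y, x⟫ : ℝ) = γ*⟪c,x⟫ - α*⟪x,x⟫ + β*⟪y,x⟫ := by
  simp only [inner_add_left, inner_sub_left, real_inner_smul_left]

set_option maxHeartbeats 2000000 in
/-- The main algebraic identity: inner product of the `V`-components of two cap vectors. -/
lemma capVec_fst_inner (x y c c' : V) (C s C' s' : ℝ)
    (hxx : (⟪x, x⟫ : ℝ) = 1) (hyy : (⟪y, y⟫ : ℝ) = 1)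
    (hs : s ≠ 0) (hs' : s' ≠ 0) (ht : 1 - (⟪x, y⟫ : ℝ) ≠ 0) :
    (⟪wvec x y c C s - (⟪wvec x y c C s, x⟫ : ℝ) • x,
      wvec x y c' C' s' - (⟪wvec x y c' C' s', x⟫ : ℝ) • x⟫ : ℝ)
    = (⟪c, c'⟫ - C * C') / (s * s')
      - (((C - ⟪y, c⟫) / ((1 - ⟪x, y⟫) * s)) * ((⟪x, c'⟫ - C') / ((1 - ⟪x, y⟫) * s'))
        + ((C' - ⟪y, c'⟫) / ((1 - ⟪x, y⟫) * s')) * ((⟪x, c⟫ - C) / ((1 - ⟪x, y⟫) * s)))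
        * (1 - ⟪x, y⟫) := by
  rw [inner_perp_part _ _ _ hxx]
  rw [show wvec x y c C s = s⁻¹ • c - ((C - ⟪y, c⟫) / ((1 - ⟪x, y⟫) * s)) • x
    + ((⟪x, c⟫ - C) / ((1 - ⟪x, y⟫) * s)) • y from rfl]
  rw [show wvec x y c' C' s' = s'⁻¹ • c' - ((C' - ⟪y, c'⟫) / ((1 - ⟪x, y⟫) * s')) • x
    + ((⟪x, c'⟫ - C') / ((1 - ⟪x, y⟫) * s')) • y from rfl]
  rw [inner_comb x y c c', inner_comb_x x y c, inner_comb_x x y c']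
  rw [real_inner_comm x c, real_inner_comm y c, real_inner_comm x c', real_inner_comm x y, hxx, hyy]
  linear_combination scal_ident ⟪c, c'⟫ ⟪x, c⟫ ⟪y, c⟫ ⟪x, c'⟫ ⟪y, c'⟫ ⟪x, y⟫ C C' s s' hs hs' ht


lemma real_inner_ℝ (a b : ℝ) : (⟪a, b⟫ : ℝ) = a * b := by
  simp [RCLike.inner_apply]
  ring

lemma eq_of_inner_eq_one {x y : V} (hx : ‖x‖ = 1) (hy : ‖y‖ = 1) (h : (⟪x, y⟫ : ℝ) = 1) :
    x = y := by
  by_contra hne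
  exact absurd ((inner_lt_one_iff_real_of_norm_eq_one hx hy).2 hne) (by rw [h]; exact lt_irrefl 1)

lemma capVec_pair (x y c c' : V) (C s C' s' : ℝ)
    (hx : ‖x‖ = 1) (hy : ‖y‖ = 1) (hs : 0 < s) (hs' : 0 < s')
    (hA : C ≤ ⟪x, c⟫) (hB : (⟪y, c⟫ : ℝ) ≤ C) (hA' : C' ≤ ⟪x, c'⟫) (hB' : (⟪y, c'⟫ : ℝ) ≤ C') :
    (⟪capVec x y c C s, capVec x y c' C' s'⟫ : ℝ) ≤ (⟪c, c'⟫ - C * C') / (s * s') := by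
  have hxx : (⟪x, x⟫ : ℝ) = 1 := by rw [real_inner_self_eq_norm_sq, hx]; norm_num
  have hyy : (⟪y, y⟫ : ℝ) = 1 := by rw [real_inner_self_eq_norm_sq, hy]; norm_num
  have hτ : (⟪x, y⟫ : ℝ) ≤ 1 := by simpa [hx, hy] using real_inner_le_norm x y
  have hiu : (⟪capVec x y c C s, capVec x y c' C' s'⟫ : ℝ)
      = ⟪wvec x y c C s - (⟪wvec x y c C s, x⟫ : ℝ) • x,
          wvec x y c' C' s' - (⟪wvec x y c' C' s', x⟫ : ℝ) • x⟫
        + Real.sqrt (2 * ((C - ⟪y, c⟫) / ((1 - ⟪x, y⟫) * s))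
            * ((⟪x, c⟫ - C) / ((1 - ⟪x, y⟫) * s)) * (1 - ⟪x, y⟫))
          * Real.sqrt (2 * ((C' - ⟪y, c'⟫) / ((1 - ⟪x, y⟫) * s'))
            * ((⟪x, c'⟫ - C') / ((1 - ⟪x, y⟫) * s')) * (1 - ⟪x, y⟫)) := by
    simp only [capVec, WithLp.prod_inner_apply, WithLp.equiv_symm_apply, WithLp.ofLp_toLp,
      real_inner_ℝ]
  rcases lt_or_eq_of_le hτ with hlt | heq
  · have ht0 : (0 : ℝ) < 1 - ⟪x, y⟫ := by linarith
    have ht : 1 - (⟪x, y⟫ : ℝ) ≠ 0 := ne_of_gt ht0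
    set a : ℝ := (C - ⟪y, c⟫) / ((1 - ⟪x, y⟫) * s) with hadef
    set b : ℝ := (⟪x, c⟫ - C) / ((1 - ⟪x, y⟫) * s) with hbdef
    set a' : ℝ := (C' - ⟪y, c'⟫) / ((1 - ⟪x, y⟫) * s') with ha'def
    set b' : ℝ := (⟪x, c'⟫ - C') / ((1 - ⟪x, y⟫) * s') with hb'def
    have ha : 0 ≤ a := div_nonneg (by linarith) (by positivity)
    have hb : 0 ≤ b := div_nonneg (by linarith) (by positivity)
    have ha' : 0 ≤ a' := div_nonneg (by linarith) (by positivity)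
    have hb' : 0 ≤ b' := div_nonneg (by linarith) (by positivity)
    have hfst := capVec_fst_inner x y c c' C s C' s' hxx hyy (ne_of_gt hs) (ne_of_gt hs') ht
    rw [hiu, hfst]
    have hsq : Real.sqrt (2 * a * b * (1 - ⟪x, y⟫)) * Real.sqrt (2 * a' * b' * (1 - ⟪x, y⟫))
        ≤ (a * b' + a' * b) * (1 - ⟪x, y⟫) := by
      rw [← Real.sqrt_mul (by positivity)]
      have h2 : (2 * a * b * (1 - ⟪x, y⟫)) * (2 * a' * b' * (1 - ⟪x, y⟫))
          ≤ ((a * b' + a' * b) * (1 - ⟪x, y⟫)) ^ 2 := by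
        nlinarith [sq_nonneg ((a * b' - a' * b) * (1 - ⟪x, y⟫))]
      calc Real.sqrt ((2 * a * b * (1 - ⟪x, y⟫)) * (2 * a' * b' * (1 - ⟪x, y⟫)))
          ≤ Real.sqrt (((a * b' + a' * b) * (1 - ⟪x, y⟫)) ^ 2) := Real.sqrt_le_sqrt h2
        _ = (a * b' + a' * b) * (1 - ⟪x, y⟫) := Real.sqrt_sq (by positivity)
    linarith
  · -- degenerate case : x = y
    have hxy : x = y := eq_of_inner_eq_one hx hy heq
    subst hxy
    have hPC : (⟪x, c⟫ : ℝ) = C := le_antisymm hB hA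
    have hPC' : (⟪x, c'⟫ : ℝ) = C' := le_antisymm hB' hA'
    have hz : 1 - (⟪x, x⟫ : ℝ) = 0 := by rw [hxx]; ring
    have hwv : wvec x x c C s = s⁻¹ • c := by
      rw [show wvec x x c C s = s⁻¹ • c - ((C - ⟪x, c⟫) / ((1 - ⟪x, x⟫) * s)) • x
        + ((⟪x, c⟫ - C) / ((1 - ⟪x, x⟫) * s)) • x from rfl, hPC, hz]
      simp
    have hwv' : wvec x x c' C' s' = s'⁻¹ • c' := by
      rw [show wvec x x c' C' s' = s'⁻¹ • c' - ((C' - ⟪x, c'⟫) / ((1 - ⟪x, x⟫) * s')) • x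
        + ((⟪x, c'⟫ - C') / ((1 - ⟪x, x⟫) * s')) • x from rfl, hPC', hz]
      simp
    rw [hiu, hwv, hwv', hPC, hPC', hz]
    simp only [sub_self, zero_div, mul_zero, zero_mul, Real.sqrt_zero, add_zero]
    rw [inner_perp_part _ _ _ hxx, real_inner_smul_left, real_inner_smul_left,
      real_inner_smul_left, real_inner_smul_right, real_inner_comm x c, real_inner_comm x c',
      hPC, hPC']
    have : s⁻¹ * (s'⁻¹ * (⟪c, c'⟫ : ℝ)) - C * (s'⁻¹ * C') * s⁻¹ = (⟪c, c'⟫ - C * C') / (s * s') := by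
      field_simp
    linarith [this]

lemma capVec_norm (x y c : V) (C s : ℝ)
    (hx : ‖x‖ = 1) (hy : ‖y‖ = 1) (hc : ‖c‖ = 1) (hs : 0 < s) (hCs : C ^ 2 + s ^ 2 = 1)
    (hA : C ≤ ⟪x, c⟫) (hB : (⟪y, c⟫ : ℝ) ≤ C) :
    ‖capVec x y c C s‖ = 1 := by
  have hxx : (⟪x, x⟫ : ℝ) = 1 := by rw [real_inner_self_eq_norm_sq, hx]; norm_num
  have hyy : (⟪y, y⟫ : ℝ) = 1 := by rw [real_inner_self_eq_norm_sq, hy]; norm_num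
  have hcc : (⟪c, c⟫ : ℝ) = 1 := by rw [real_inner_self_eq_norm_sq, hc]; norm_num
  have hss : (1 : ℝ) - C * C = s * s := by nlinarith [hCs]
  have hτ : (⟪x, y⟫ : ℝ) ≤ 1 := by simpa [hx, hy] using real_inner_le_norm x y
  have hiu : (⟪capVec x y c C s, capVec x y c C s⟫ : ℝ)
      = ⟪wvec x y c C s - (⟪wvec x y c C s, x⟫ : ℝ) • x,
          wvec x y c C s - (⟪wvec x y c C s, x⟫ : ℝ) • x⟫
        + Real.sqrt (2 * ((C - ⟪y, c⟫) / ((1 - ⟪x, y⟫) * s))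
            * ((⟪x, c⟫ - C) / ((1 - ⟪x, y⟫) * s)) * (1 - ⟪x, y⟫))
          * Real.sqrt (2 * ((C - ⟪y, c⟫) / ((1 - ⟪x, y⟫) * s))
            * ((⟪x, c⟫ - C) / ((1 - ⟪x, y⟫) * s)) * (1 - ⟪x, y⟫)) := by
    simp only [capVec, WithLp.prod_inner_apply, WithLp.equiv_symm_apply, WithLp.ofLp_toLp,
      real_inner_ℝ]
  have key : (⟪capVec x y c C s, capVec x y c C s⟫ : ℝ) = 1 := by
    rcases lt_or_eq_of_le hτ with hlt | heq
    · have ht0 : (0 : ℝ) < 1 - ⟪x, y⟫ := by linarith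
      have ht : 1 - (⟪x, y⟫ : ℝ) ≠ 0 := ne_of_gt ht0
      set a : ℝ := (C - ⟪y, c⟫) / ((1 - ⟪x, y⟫) * s) with hadef
      set b : ℝ := (⟪x, c⟫ - C) / ((1 - ⟪x, y⟫) * s) with hbdef
      have ha : 0 ≤ a := div_nonneg (by linarith) (by positivity)
      have hb : 0 ≤ b := div_nonneg (by linarith) (by positivity)
      have hfst := capVec_fst_inner x y c c C s C s hxx hyy (ne_of_gt hs) (ne_of_gt hs) ht
      rw [hiu, hfst, Real.mul_self_sqrt (by positivity), hcc]
      have h1 : (1 - C * C) / (s * s) = 1 := by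
        rw [hss]; field_simp
      linarith
    · have hxy : x = y := eq_of_inner_eq_one hx hy heq
      subst hxy
      have hPC : (⟪x, c⟫ : ℝ) = C := le_antisymm hB hA
      have hz : 1 - (⟪x, x⟫ : ℝ) = 0 := by rw [hxx]; ring
      have hwv : wvec x x c C s = s⁻¹ • c := by
        rw [show wvec x x c C s = s⁻¹ • c - ((C - ⟪x, c⟫) / ((1 - ⟪x, x⟫) * s)) • x
          + ((⟪x, c⟫ - C) / ((1 - ⟪x, x⟫) * s)) • x from rfl, hPC, hz]
        simp
      rw [hiu, hwv, hPC, hz]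
      simp only [sub_self, zero_div, mul_zero, zero_mul, Real.sqrt_zero, add_zero]
      rw [inner_perp_part _ _ _ hxx]
      simp only [real_inner_smul_left, real_inner_smul_right]
      rw [real_inner_comm x c, hcc, hPC]
      have hs0 : s ≠ 0 := ne_of_gt hs
      field_simp
      linear_combination hss
  have h2 : ‖capVec x y c C s‖ ^ 2 = 1 := by rw [← real_inner_self_eq_norm_sq]; exact key
  rw [← Real.sqrt_sq (norm_nonneg (capVec x y c C s)), h2, Real.sqrt_one]

end Aux

/-- Lemma 3.3: three pairwise intersecting spherical caps whose open parts do not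
cover the sphere and whose overlap angles have sum less than `π` have empty common
intersection. -/
theorem caps_empty_triple_intersection_of_not_cover
    (c₁ c₂ c₃ : EuclideanSpace ℝ (Fin 3))
    (hc₁ : ‖c₁‖ = 1) (hc₂ : ‖c₂‖ = 1) (hc₃ : ‖c₃‖ = 1)
    (r₁ r₂ r₃ : ℝ)
    (hr₁ : r₁ ∈ Set.Ioo 0 π) (hr₂ : r₂ ∈ Set.Ioo 0 π) (hr₃ : r₃ ∈ Set.Ioo 0 π)
    (D₁ D₂ D₃ : Set (EuclideanSpace ℝ (Fin 3)))
    (hD₁ : D₁ = {x | ‖x‖ = 1 ∧ cos r₁ ≤ (inner ℝ x c₁ : ℝ)})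
    (hD₂ : D₂ = {x | ‖x‖ = 1 ∧ cos r₂ ≤ (inner ℝ x c₂ : ℝ)})
    (hD₃ : D₃ = {x | ‖x‖ = 1 ∧ cos r₃ ≤ (inner ℝ x c₃ : ℝ)})
    (h₁₂ : (D₁ ∩ D₂).Nonempty) (h₂₃ : (D₂ ∩ D₃).Nonempty) (h₃₁ : (D₃ ∩ D₁).Nonempty)
    (hcover : ∃ x : EuclideanSpace ℝ (Fin 3), ‖x‖ = 1 ∧
        (inner ℝ x c₁ : ℝ) ≤ cos r₁ ∧ (inner ℝ x c₂ : ℝ) ≤ cos r₂ ∧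
        (inner ℝ x c₃ : ℝ) ≤ cos r₃)
    (θ₁₂ θ₂₃ θ₃₁ : ℝ)
    (hθ₁₂ : θ₁₂ ∈ Set.Ico 0 π) (hθ₂₃ : θ₂₃ ∈ Set.Ico 0 π) (hθ₃₁ : θ₃₁ ∈ Set.Ico 0 π)
    (hcos₁₂ : cos θ₁₂ = (cos r₁ * cos r₂ - (inner ℝ c₁ c₂ : ℝ)) / (sin r₁ * sin r₂))
    (hcos₂₃ : cos θ₂₃ = (cos r₂ * cos r₃ - (inner ℝ c₂ c₃ : ℝ)) / (sin r₂ * sin r₃))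
    (hcos₃₁ : cos θ₃₁ = (cos r₃ * cos r₁ - (inner ℝ c₃ c₁ : ℝ)) / (sin r₃ * sin r₁))
    (hsum : θ₁₂ + θ₂₃ + θ₃₁ < π) :
    D₁ ∩ D₂ ∩ D₃ = ∅ := by
  obtain ⟨y, hyn, hy1, hy2, hy3⟩ := hcover
  have hs₁ : 0 < sin r₁ := Real.sin_pos_of_pos_of_lt_pi hr₁.1 hr₁.2
  have hs₂ : 0 < sin r₂ := Real.sin_pos_of_pos_of_lt_pi hr₂.1 hr₂.2
  have hs₃ : 0 < sin r₃ := Real.sin_pos_of_pos_of_lt_pi hr₃.1 hr₃.2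
  rw [Set.eq_empty_iff_forall_notMem]
  intro z hz
  obtain ⟨⟨hz1, hz2⟩, hz3⟩ := hz
  rw [hD₁] at hz1; rw [hD₂] at hz2; rw [hD₃] at hz3
  obtain ⟨hzn, hzc1⟩ := hz1
  obtain ⟨-, hzc2⟩ := hz2
  obtain ⟨-, hzc3⟩ := hz3
  have hn₁ := capVec_norm z y c₁ (cos r₁) (sin r₁) hzn hyn hc₁ hs₁
    (Real.cos_sq_add_sin_sq r₁) hzc1 hy1
  have hn₂ := capVec_norm z y c₂ (cos r₂) (sin r₂) hzn hyn hc₂ hs₂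
    (Real.cos_sq_add_sin_sq r₂) hzc2 hy2
  have hn₃ := capVec_norm z y c₃ (cos r₃) (sin r₃) hzn hyn hc₃ hs₃
    (Real.cos_sq_add_sin_sq r₃) hzc3 hy3
  have hp₁₂ := capVec_pair z y c₁ c₂ (cos r₁) (sin r₁) (cos r₂) (sin r₂)
    hzn hyn hs₁ hs₂ hzc1 hy1 hzc2 hy2
  have hp₂₃ := capVec_pair z y c₂ c₃ (cos r₂) (sin r₂) (cos r₃) (sin r₃)
    hzn hyn hs₂ hs₃ hzc2 hy2 hzc3 hy3
  have hp₃₁ := capVec_pair z y c₃ c₁ (cos r₃) (sin r₃) (cos r₁) (sin r₁)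
    hzn hyn hs₃ hs₁ hzc3 hy3 hzc1 hy1
  have hb₁₂ : (inner ℝ (capVec z y c₁ (cos r₁) (sin r₁)) (capVec z y c₂ (cos r₂) (sin r₂)) : ℝ)
      ≤ -cos θ₁₂ := by
    rw [hcos₁₂]
    have : -((cos r₁ * cos r₂ - (inner ℝ c₁ c₂ : ℝ)) / (sin r₁ * sin r₂))
        = ((inner ℝ c₁ c₂ : ℝ) - cos r₁ * cos r₂) / (sin r₁ * sin r₂) := by ring
    linarith [hp₁₂]
  have hb₂₃ : (inner ℝ (capVec z y c₂ (cos r₂) (sin r₂)) (capVec z y c₃ (cos r₃) (sin r₃)) : ℝ)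
      ≤ -cos θ₂₃ := by
    rw [hcos₂₃]
    have : -((cos r₂ * cos r₃ - (inner ℝ c₂ c₃ : ℝ)) / (sin r₂ * sin r₃))
        = ((inner ℝ c₂ c₃ : ℝ) - cos r₂ * cos r₃) / (sin r₂ * sin r₃) := by ring
    linarith [hp₂₃]
  have hb₃₁ : (inner ℝ (capVec z y c₃ (cos r₃) (sin r₃)) (capVec z y c₁ (cos r₁) (sin r₁)) : ℝ)
      ≤ -cos θ₃₁ := by
    rw [hcos₃₁]
    have : -((cos r₃ * cos r₁ - (inner ℝ c₃ c₁ : ℝ)) / (sin r₃ * sin r₁))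
        = ((inner ℝ c₃ c₁ : ℝ) - cos r₃ * cos r₁) / (sin r₃ * sin r₁) := by ring
    linarith [hp₃₁]
  have hge := core_angle_lemma
    (capVec z y c₁ (cos r₁) (sin r₁)) (capVec z y c₂ (cos r₂) (sin r₂))
    (capVec z y c₃ (cos r₃) (sin r₃)) hn₁ hn₂ hn₃ θ₁₂ θ₂₃ θ₃₁ hθ₁₂ hθ₂₃ hθ₃₁ hb₁₂ hb₂₃ hb₃₁
  linarith
end

section
/- Let D₁, D₂, D₃ be closed disks in the Euclidean plane with centers z₁, z₂, z₃ and radii r₁, r₂, r₃ > 0, such that D₂ ∩ D₃ and D₃ ∩ D₁ are nonempty with overlap angles θ₂₃, θ₃₁ ∈ [0,π) (i.e. cos θ_μν = (‖z_μ − z_ν‖² − r_μ² − r_ν²)/(2 r_μ r_ν)), and such that D₁ ∩ D₂ consists of a single point p with p ∈ D₃. Then θ₂₃ + θ₃₁ ≥ π, and equality holds if and only if p lies on the boundary circle of D₃ (i.e. ‖p − z₃‖ = r₃). -/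
open Real Metric

/-- If two closed balls in the plane have `dist z₁ z₂ < r₁ + r₂`, their
intersection contains two distinct points. -/
lemma exists_two_points_inter (z₁ z₂ : EuclideanSpace ℝ (Fin 2)) (r₁ r₂ : ℝ)
    (hr₁ : 0 < r₁) (hr₂ : 0 < r₂) (h : dist z₁ z₂ < r₁ + r₂) :
    ∃ a b, a ∈ closedBall z₁ r₁ ∩ closedBall z₂ r₂ ∧
      b ∈ closedBall z₁ r₁ ∩ closedBall z₂ r₂ ∧ a ≠ b := by
  by_cases hz : z₁ = z₂
  · subst hz
    set m := min r₁ r₂ with hm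
    have hm0 : 0 < m := lt_min hr₁ hr₂
    refine ⟨z₁, z₁ + m • EuclideanSpace.single 0 1, ?_, ?_, ?_⟩
    · exact ⟨mem_closedBall_self hr₁.le, mem_closedBall_self hr₂.le⟩
    · have hd : dist (z₁ + m • EuclideanSpace.single (0 : Fin 2) (1:ℝ)) z₁ = m := by
        rw [dist_eq_norm, add_sub_cancel_left, norm_smul,
          EuclideanSpace.norm_single]
        simp [abs_of_pos hm0]
      constructor <;> rw [mem_closedBall, hd]
      · exact min_le_left _ _
      · exact min_le_right _ _
    · intro hEq
      have : m • EuclideanSpace.single (0 : Fin 2) (1:ℝ) = 0 := by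
        have := hEq
        nth_rewrite 1 [← add_zero z₁] at this
        exact (add_right_injective z₁ this.symm)
      have hn : ‖m • EuclideanSpace.single (0 : Fin 2) (1:ℝ)‖ = m := by
        rw [norm_smul, EuclideanSpace.norm_single]; simp [abs_of_pos hm0]
      rw [this, norm_zero] at hn
      exact hm0.ne hn
  · set d := dist z₁ z₂ with hd
    have hd0 : 0 < d := dist_pos.2 hz
    set u : EuclideanSpace ℝ (Fin 2) := d⁻¹ • (z₂ - z₁) with hu
    have hnu : ‖u‖ = 1 := by
      rw [hu, norm_smul, norm_inv, Real.norm_eq_abs, abs_of_pos hd0,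
        ← dist_eq_norm']
      exact inv_mul_cancel₀ hd0.ne'
    have hz₂ : z₂ = z₁ + d • u := by
      rw [hu, smul_smul, mul_inv_cancel₀ hd0.ne', one_smul]
      abel
    have key : ∀ s : ℝ, 0 ≤ s → s ≤ d → s ≤ r₁ → d - s ≤ r₂ →
        z₁ + s • u ∈ closedBall z₁ r₁ ∩ closedBall z₂ r₂ := by
      intro s hs0 hsd hs1 hs2
      constructor
      · rw [mem_closedBall, dist_eq_norm, add_sub_cancel_left, norm_smul, hnu,
          mul_one, Real.norm_eq_abs, abs_of_nonneg hs0]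
        exact hs1
      · rw [mem_closedBall, hz₂, dist_eq_norm]
        have : z₁ + s • u - (z₁ + d • u) = (s - d) • u := by
          rw [sub_smul]; abel
        rw [this, norm_smul, hnu, mul_one, Real.norm_eq_abs,
          abs_of_nonpos (by linarith)]
        linarith
    set s₁ := max 0 (d - r₂) with hs₁
    set s₂ := min d r₁ with hs₂
    have hlt : s₁ < s₂ := by
      apply max_lt <;> apply lt_min <;> linarith
    refine ⟨z₁ + s₁ • u, z₁ + s₂ • u, ?_, ?_, ?_⟩
    · exact key s₁ (le_max_left _ _) (max_le hd0.le (by linarith))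
        (le_trans hlt.le (min_le_right _ _))
        (by have := le_max_right 0 (d - r₂); linarith)
    · exact key s₂ (le_trans (le_max_left _ _) hlt.le) (min_le_left _ _)
        (min_le_right _ _)
        (by have := le_max_right 0 (d - r₂); linarith [hlt.le])
    · intro hEq
      have h2 : s₁ • u = s₂ • u := add_right_injective z₁ hEq
      have : (s₁ - s₂) • u = 0 := by rw [sub_smul, h2, sub_self]
      rcases smul_eq_zero.1 this with h | h
      · exact hlt.ne (by linarith [sub_eq_zero.1 h])
      · rw [h, norm_zero] at hnu; norm_num at hnu

/-- Lemma 4.4 (second part): if two disks are externally tangent at a point `p`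
contained in a third disk, then `θ₂₃ + θ₃₁ ≥ π`, with equality exactly when `p` lies
on the boundary circle of the third disk. -/
theorem overlap_angle_relation_tangent (z₁ z₂ z₃ : EuclideanSpace ℝ (Fin 2))
    (r₁ r₂ r₃ : ℝ) (hr₁ : 0 < r₁) (hr₂ : 0 < r₂) (hr₃ : 0 < r₃)
    (h₂₃ : (closedBall z₂ r₂ ∩ closedBall z₃ r₃).Nonempty)
    (h₃₁ : (closedBall z₃ r₃ ∩ closedBall z₁ r₁).Nonempty)
    (θ₂₃ θ₃₁ : ℝ)
    (hθ₂₃ : θ₂₃ ∈ Set.Ico 0 π) (hθ₃₁ : θ₃₁ ∈ Set.Ico 0 π)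
    (hcos₂₃ : cos θ₂₃ = (dist z₂ z₃ ^ 2 - r₂ ^ 2 - r₃ ^ 2) / (2 * r₂ * r₃))
    (hcos₃₁ : cos θ₃₁ = (dist z₃ z₁ ^ 2 - r₃ ^ 2 - r₁ ^ 2) / (2 * r₃ * r₁))
    (p : EuclideanSpace ℝ (Fin 2))
    (hp : closedBall z₁ r₁ ∩ closedBall z₂ r₂ = {p})
    (hpD₃ : p ∈ closedBall z₃ r₃) :
    θ₂₃ + θ₃₁ ≥ π ∧ (θ₂₃ + θ₃₁ = π ↔ dist p z₃ = r₃) := by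
  -- p is in both balls
  have hpmem : p ∈ closedBall z₁ r₁ ∩ closedBall z₂ r₂ := by
    rw [hp]; exact rfl
  have hp1 : dist p z₁ ≤ r₁ := hpmem.1
  have hp2 : dist p z₂ ≤ r₂ := hpmem.2
  -- tangency: dist z₁ z₂ = r₁ + r₂
  have htang : dist z₁ z₂ = r₁ + r₂ := by
    refine le_antisymm ?_ ?_
    · calc dist z₁ z₂ ≤ dist z₁ p + dist p z₂ := dist_triangle _ _ _
        _ ≤ r₁ + r₂ := add_le_add (by rwa [dist_comm]) hp2
    · by_contra hlt
      push_neg at hlt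
      obtain ⟨a, b, ha, hb, hab⟩ :=
        exists_two_points_inter z₁ z₂ r₁ r₂ hr₁ hr₂ hlt
      rw [hp] at ha hb
      exact hab (ha.trans hb.symm)
  have hd1 : dist z₁ p = r₁ := by
    have h1 : dist z₁ p ≤ r₁ := by rwa [dist_comm]
    nlinarith [dist_triangle z₁ p z₂, htang]
  have hd2 : dist p z₂ = r₂ := by
    nlinarith [dist_triangle z₁ p z₂, htang, hd1]
  -- p is between z₁ and z₂
  have hbtw : Wbtw ℝ z₁ p z₂ := dist_add_dist_eq_iff.1 (by rw [hd1, hd2, htang])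
  obtain ⟨t, ht, hteq⟩ := hbtw
  rw [AffineMap.lineMap_apply_module] at hteq
  -- key vector identity
  have hpz₁ : p - z₁ = t • (z₂ - z₁) := by
    rw [← hteq]; module
  have hz₂p : z₂ - p = (1 - t) • (z₂ - z₁) := by
    rw [← hteq]; module
  have hnz : ‖z₂ - z₁‖ = r₁ + r₂ := by rw [← dist_eq_norm', htang]
  have htval : t * (r₁ + r₂) = r₁ := by
    have : ‖p - z₁‖ = r₁ := by rw [← dist_eq_norm']; exact hd1
    rw [hpz₁, norm_smul, Real.norm_eq_abs, abs_of_nonneg ht.1, hnz] at this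
    exact this
  have hkey : r₂ • (p - z₁) = r₁ • (z₂ - p) := by
    rw [hpz₁, hz₂p, smul_smul, smul_smul]
    congr 1
    nlinarith
  -- the algebraic identity for cos sums
  set x := z₂ - p with hx
  set w := p - z₁ with hw
  set y := p - z₃ with hy
  have hnx : ‖x‖ = r₂ := by rw [hx, ← dist_eq_norm', hd2]
  have hnw : ‖w‖ = r₁ := by rw [hw, ← dist_eq_norm, dist_comm, hd1]
  have hd23 : dist z₂ z₃ ^ 2 = r₂ ^ 2 + 2 * inner ℝ x y + ‖y‖ ^ 2 := by
    have : z₂ - z₃ = x + y := by rw [hx, hy]; abel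
    rw [dist_eq_norm, this, norm_add_sq_real, hnx]
  have hd31 : dist z₃ z₁ ^ 2 = r₁ ^ 2 - 2 * inner ℝ w y + ‖y‖ ^ 2 := by
    have : z₃ - z₁ = w - y := by rw [hw, hy]; abel
    rw [dist_eq_norm, this, norm_sub_sq_real, hnw]
  have hinner : r₁ * inner ℝ x y - r₂ * inner ℝ w y = (0:ℝ) := by
    have : ((inner ℝ (r₁ • x - r₂ • w) y : ℝ)) = 0 := by
      have h0 : r₁ • x - r₂ • w = 0 := by rw [hx, hw, hkey]; abel
      rw [h0, inner_zero_left]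
    rw [inner_sub_left, real_inner_smul_left, real_inner_smul_left] at this
    linarith
  have hdpy : dist p z₃ = ‖y‖ := by rw [hy, dist_eq_norm]
  have hylt : ‖y‖ ≤ r₃ := by rw [← hdpy]; exact hpD₃
  have hyn : 0 ≤ ‖y‖ := norm_nonneg _
  clear_value x w y
  -- cos sum formula
  have hsum : cos θ₂₃ + cos θ₃₁ = (r₁ + r₂) * (‖y‖ ^ 2 - r₃ ^ 2) / (2 * r₁ * r₂ * r₃) := by
    rw [hcos₂₃, hcos₃₁, hd23, hd31]
    rw [div_add_div _ _ (by positivity) (by positivity),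
      div_eq_div_iff (by positivity) (by positivity)]
    linear_combination (8 * r₁ * r₂ * r₃ ^ 2) * hinner
  clear hp hpmem hteq hpz₁ hz₂p hkey hd23 hd31 hcos₂₃ hcos₃₁ hx hw hy h₂₃ h₃₁ hpD₃ hinner hp1 hp2 htang hd1 hd2 hnz htval hnx hnw ht
  clear x w t z₁ z₂
  have hsum_le : cos θ₂₃ + cos θ₃₁ ≤ 0 := by
    rw [hsum]
    have hy2 : ‖y‖ ^ 2 ≤ r₃ ^ 2 := pow_le_pow_left₀ hyn hylt 2
    apply div_nonpos_of_nonpos_of_nonneg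
    · exact mul_nonpos_of_nonneg_of_nonpos (by linarith) (by linarith)
    · positivity
  -- convert to angle inequality
  have hmem1 : θ₂₃ ∈ Set.Icc 0 π := ⟨hθ₂₃.1, hθ₂₃.2.le⟩
  have hmem2 : π - θ₃₁ ∈ Set.Icc 0 π := ⟨by linarith [hθ₃₁.2], by linarith [hθ₃₁.1]⟩
  have hcos_le : cos θ₂₃ ≤ cos (π - θ₃₁) := by
    rw [Real.cos_pi_sub]; linarith
  have hge : θ₂₃ + θ₃₁ ≥ π := by
    have := (Real.strictAntiOn_cos.le_iff_ge hmem1 hmem2).1 hcos_le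
    linarith
  refine ⟨hge, ?_, ?_⟩
  · intro heq
    have hceq : cos θ₂₃ = cos (π - θ₃₁) := by
      congr 1; linarith
    have : cos θ₂₃ + cos θ₃₁ = 0 := by
      rw [hceq, Real.cos_pi_sub]; ring
    rw [hsum] at this
    have hnum : (r₁ + r₂) * (‖y‖ ^ 2 - r₃ ^ 2) = 0 := by
      have hden : (2 * r₁ * r₂ * r₃) ≠ 0 := by positivity
      field_simp at this
      linarith
    have : ‖y‖ ^ 2 = r₃ ^ 2 := by
      have : ‖y‖ ^ 2 - r₃ ^ 2 = 0 := by
        rcases mul_eq_zero.1 hnum with h | h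
        · linarith
        · exact h
      linarith
    rw [hdpy]
    nlinarith
  · intro heq
    have : ‖y‖ = r₃ := by rwa [← hdpy]
    have hzero : cos θ₂₃ + cos θ₃₁ = 0 := by
      rw [hsum, this]; ring
    have hceq : cos θ₂₃ = cos (π - θ₃₁) := by
      rw [Real.cos_pi_sub]; linarith
    have := Real.strictAntiOn_cos.injOn hmem1 hmem2 hceq
    linarith
end

section
/- Let E be a nonempty finite set, and let A be a finite family of pairs of elements of E, B and C finite families of triples of elements of E, and Q a finite family of quadruples of elements of E. Define W₀ to be the set of functions Θ : E → (0,π) such that: Θ(e₁)+Θ(e₂) < π for every (e₁,e₂) ∈ A; Θ(e₁)+Θ(e₂)+Θ(e₃) > π, Θ(e₁)+Θ(e₂) < Θ(e₃)+π, Θ(e₂)+Θ(e₃) < Θ(e₁)+π, and Θ(e₃)+Θ(e₁) < Θ(e₂)+π for every (e₁,e₂,e₃) ∈ B; Θ(e₁)+Θ(e₂)+Θ(e₃) < π for every (e₁,e₂,e₃) ∈ C; and Θ(e₁)+Θ(e₂)+Θ(e₃)+Θ(e₄) < 2π for every (e₁,e₂,e₃,e₄) ∈ Q. If W₀ is nonempty,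 then W₀ ∩ (0,π/2)^E is nonempty, and moreover W₀ ∩ (0,π/2)^E has positive Lebesgue measure as a subset of ℝ^E. -/
open Real MeasureTheory

/-- Lemma 2.1: if the (open, convex-type) set `W₀` of admissible angle functions is
nonempty, then it contains non-obtuse angle functions, and the set of non-obtuse
functions in `W₀` has positive Lebesgue measure in `ℝ^E`. -/
theorem W0_inter_nonobtuse_nonempty_posMeasure
    {E : Type*} [Fintype E] [Nonempty E]
    (A : Finset (E × E)) (B C : Finset (E × E × E)) (Q : Finset (E × E × E × E))
    (W₀ : Set (E → ℝ))
    (hW₀ : W₀ = {Θ | (∀ e, Θ e ∈ Set.Ioo 0 π) ∧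
        (∀ p ∈ A, Θ p.1 + Θ p.2 < π) ∧
        (∀ t ∈ B, Θ t.1 + Θ t.2.1 + Θ t.2.2 > π ∧
            Θ t.1 + Θ t.2.1 < Θ t.2.2 + π ∧
            Θ t.2.1 + Θ t.2.2 < Θ t.1 + π ∧
            Θ t.2.2 + Θ t.1 < Θ t.2.1 + π) ∧
        (∀ t ∈ C, Θ t.1 + Θ t.2.1 + Θ t.2.2 < π) ∧
        (∀ q ∈ Q, Θ q.1 + Θ q.2.1 + Θ q.2.2.1 + Θ q.2.2.2 < 2 * π)})
    (hne : W₀.Nonempty) :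
    (W₀ ∩ {Θ | ∀ e, Θ e ∈ Set.Ioo 0 (π / 2)}).Nonempty ∧
    0 < volume (W₀ ∩ {Θ | ∀ e, Θ e ∈ Set.Ioo 0 (π / 2)}) := by
  have hpi := Real.pi_pos
  obtain ⟨Θ, hΘ⟩ := hne
  rw [hW₀] at hΘ
  obtain ⟨h0, hA, hB, hC, hQ⟩ := hΘ
  -- the deformed angle function
  set Θ' : E → ℝ := fun e => (1/8) * Θ e + (7/8) * (π/3) with hΘ'def
  have hmem : Θ' ∈ W₀ ∩ {Θ | ∀ e, Θ e ∈ Set.Ioo 0 (π / 2)} := by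
    constructor
    · rw [hW₀]
      refine ⟨?_, ?_, ?_, ?_, ?_⟩
      · intro e
        have h1 := (h0 e).1; have h2 := (h0 e).2
        constructor <;> simp only [hΘ'def] <;> nlinarith
      · intro p hp
        have := hA p hp
        simp only [hΘ'def]; nlinarith
      · intro t ht
        obtain ⟨h1, h2, h3, h4⟩ := hB t ht
        refine ⟨?_, ?_, ?_, ?_⟩ <;> simp only [hΘ'def] <;> nlinarith
      · intro t ht
        have := hC t ht
        simp only [hΘ'def]; nlinarith
      · intro q hq
        have := hQ q hq
        simp only [hΘ'def]; nlinarith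
    · intro e
      have h1 := (h0 e).1; have h2 := (h0 e).2
      constructor <;> simp only [hΘ'def] <;> nlinarith
  have hopen : IsOpen (W₀ ∩ {Θ | ∀ e, Θ e ∈ Set.Ioo 0 (π / 2)}) := by
    apply IsOpen.inter
    · rw [hW₀]
      have e1 : IsOpen {Θ : E → ℝ | ∀ e, Θ e ∈ Set.Ioo 0 π} := by
        rw [Set.setOf_forall]
        exact isOpen_iInter_of_finite fun e =>
          (isOpen_Ioo).preimage (continuous_apply e)
      have e2 : IsOpen {Θ : E → ℝ | ∀ p ∈ A, Θ p.1 + Θ p.2 < π} := by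
        rw [Set.setOf_forall]
        refine isOpen_iInter_of_finite fun p => ?_
        rw [Set.setOf_forall]
        refine isOpen_iInter_of_finite fun hp => ?_
        exact isOpen_lt ((continuous_apply p.1).add (continuous_apply p.2))
          continuous_const
      have e3 : IsOpen {Θ : E → ℝ | ∀ t ∈ B,
          Θ t.1 + Θ t.2.1 + Θ t.2.2 > π ∧
          Θ t.1 + Θ t.2.1 < Θ t.2.2 + π ∧
          Θ t.2.1 + Θ t.2.2 < Θ t.1 + π ∧
          Θ t.2.2 + Θ t.1 < Θ t.2.1 + π} := by
        rw [Set.setOf_forall]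
        refine isOpen_iInter_of_finite fun t => ?_
        rw [Set.setOf_forall]
        refine isOpen_iInter_of_finite fun ht => ?_
        simp only [Set.setOf_and]
        refine IsOpen.inter (isOpen_lt continuous_const
            (((continuous_apply t.1).add (continuous_apply t.2.1)).add
              (continuous_apply t.2.2))) (IsOpen.inter ?_ (IsOpen.inter ?_ ?_))
        · exact isOpen_lt ((continuous_apply t.1).add (continuous_apply t.2.1))
            ((continuous_apply t.2.2).add continuous_const)
        · exact isOpen_lt ((continuous_apply t.2.1).add (continuous_apply t.2.2))
            ((continuous_apply t.1).add continuous_const)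
        · exact isOpen_lt ((continuous_apply t.2.2).add (continuous_apply t.1))
            ((continuous_apply t.2.1).add continuous_const)
      have e4 : IsOpen {Θ : E → ℝ | ∀ t ∈ C, Θ t.1 + Θ t.2.1 + Θ t.2.2 < π} := by
        rw [Set.setOf_forall]
        refine isOpen_iInter_of_finite fun t => ?_
        rw [Set.setOf_forall]
        refine isOpen_iInter_of_finite fun ht => ?_
        exact isOpen_lt (((continuous_apply t.1).add (continuous_apply t.2.1)).add
          (continuous_apply t.2.2)) continuous_const
      have e5 : IsOpen {Θ : E → ℝ | ∀ q ∈ Q,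
          Θ q.1 + Θ q.2.1 + Θ q.2.2.1 + Θ q.2.2.2 < 2 * π} := by
        rw [Set.setOf_forall]
        refine isOpen_iInter_of_finite fun q => ?_
        rw [Set.setOf_forall]
        refine isOpen_iInter_of_finite fun hq => ?_
        exact isOpen_lt ((((continuous_apply q.1).add (continuous_apply q.2.1)).add
          (continuous_apply q.2.2.1)).add (continuous_apply q.2.2.2)) continuous_const
      simp only [Set.setOf_and]
      exact e1.inter (e2.inter (e3.inter (e4.inter e5)))
    · rw [Set.setOf_forall]
      exact isOpen_iInter_of_finite fun e =>
        (isOpen_Ioo).preimage (continuous_apply e)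
  exact ⟨⟨Θ', hmem⟩, hopen.measure_pos volume ⟨Θ', hmem⟩⟩
end
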